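/- arXiv:2207.03619 — 7 statements merged into one kernel-verified Lean document; each statement's English description precedes it below -/
import Mathlib

section
/- Let ℓ ≥ 1 and n ≥ 2 be integers and let a, b be integers. Let S be an ℓ×n matrix with entries in {1,−1} whose first column is the all-ones vector 𝟙 and which satisfies S𝟙 = 0, and write S = (𝟙 | J − 2X), where J is the ℓ×(n−1) all-ones matrix, so that X is an ℓ×(n−1) matrix with entries in {0,1}. Then the following are equivalent: (1) SSᵀ = n·I_ℓ and the dot product of every two distinct columns of S lies in {a,b}; (2) every two distinct rows of X have dot product equal to n/4, every column sum of X lies in {(ℓ−a)/2, (ℓ−b)/2}, and every two distinct columns of X have dot product lying in {(ℓ−a)/4, (ℓ−b)/4, (ℓ+a−2b)/4, (ℓ+b−2a)/4} (all equalities read as equalities of rational numbers). -/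
open Matrix

private lemma aux_expand_sum {m : ℕ} (a b : ℤ) (f : Fin m → ℤ) :
    ∑ k, (f k - a) * (f k - b) = ∑ k, (f k)^2 - (a+b) * ∑ k, f k + m * (a*b) := by
  have h : ∀ k : Fin m, (f k - a)*(f k - b) = ((f k)^2 - (a+b)*(f k)) + a*b := fun k => by ring
  rw [Finset.sum_congr rfl fun k _ => h k, Finset.sum_add_distrib, Finset.sum_sub_distrib,
    ← Finset.mul_sum, Finset.sum_const, Finset.card_univ, Fintype.card_fin, nsmul_eq_mul]

private lemma aux_frame_sq {ℓ n : ℕ} (c : ℤ) (S : Matrix (Fin ℓ) (Fin n) ℤ)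
    (hsq : ∀ i j, S i j * S i j = 1)
    (horth : ∀ i i', ∑ k, S i k * S i' k = if i = i' then c else 0) (j : Fin n) :
    ∑ k, (∑ i, S i j * S i k)^2 = c * ℓ := by
  have e1 : ∀ k : Fin n, (∑ i, S i j * S i k)^2
      = ∑ i, ∑ i', (S i j * S i' j) * (S i k * S i' k) := by
    intro k
    rw [sq, Finset.sum_mul_sum]
    exact Finset.sum_congr rfl fun i _ => Finset.sum_congr rfl fun i' _ => by ring
  rw [Finset.sum_congr rfl fun k _ => e1 k, Finset.sum_comm]
  have e2 : ∀ i : Fin ℓ, ∑ k, ∑ i', (S i j * S i' j) * (S i k * S i' k) = c := by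
    intro i
    rw [Finset.sum_comm]
    have e3 : ∀ i' : Fin ℓ, ∑ k, (S i j * S i' j) * (S i k * S i' k)
        = (S i j * S i' j) * (if i' = i then c else 0) := by
      intro i'
      rw [← Finset.mul_sum, horth i i']
      simp [eq_comm]
    rw [Finset.sum_congr rfl fun i' _ => e3 i']
    simp [hsq]
  rw [Finset.sum_congr rfl fun i _ => e2 i]
  simp [Finset.sum_const, Finset.card_univ, mul_comm]

private lemma aux_int_of_q4 (q z : ℤ) (h : (q:ℚ) = (z:ℚ)/4) : 4*q = z := by
  have h2 : ((4*q:ℤ):ℚ) = ((z:ℤ):ℚ) := by push_cast; linarith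
  exact_mod_cast h2

private lemma aux_q4_of_int (q z : ℤ) (h : 4*q = z) : (q:ℚ) = (z:ℚ)/4 := by
  have h2 : ((4*q:ℤ):ℚ) = ((z:ℤ):ℚ) := by exact_mod_cast h
  push_cast at h2; linarith

private lemma aux_int_of_q2 (q z : ℤ) (h : (q:ℚ) = (z:ℚ)/2) : 2*q = z := by
  have h2 : ((2*q:ℤ):ℚ) = ((z:ℤ):ℚ) := by push_cast; linarith
  exact_mod_cast h2

private lemma aux_q2_of_int (q z : ℤ) (h : 2*q = z) : (q:ℚ) = (z:ℚ)/2 := by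
  have h2 : ((2*q:ℤ):ℚ) = ((z:ℤ):ℚ) := by exact_mod_cast h
  push_cast at h2; linarith

set_option maxHeartbeats 2000000 in
theorem stmt1 {ℓ m : ℕ} (hℓ : 1 ≤ ℓ) (hm : 1 ≤ m) (a b : ℤ)
    (S : Matrix (Fin ℓ) (Fin (m + 1)) ℤ)
    (hS : ∀ i j, S i j = 1 ∨ S i j = -1)
    (hcol0 : ∀ i, S i 0 = 1)
    (hrowsum : ∀ i, ∑ j, S i j = 0)
    (X : Matrix (Fin ℓ) (Fin m) ℤ)
    (hX : ∀ i (j : Fin m), S i j.succ = 1 - 2 * X i j) :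
    ((S * Sᵀ = ((m + 1 : ℕ) : ℤ) • 1) ∧
      (∀ j k : Fin (m + 1), j ≠ k →
        (∑ i, S i j * S i k) = a ∨ (∑ i, S i j * S i k) = b))
    ↔
    ((∀ i i' : Fin ℓ, i ≠ i' →
        ((∑ j, X i j * X i' j : ℤ) : ℚ) = ((m : ℚ) + 1) / 4) ∧
     (∀ j : Fin m,
        ((∑ i, X i j : ℤ) : ℚ) = ((ℓ : ℚ) - (a : ℚ)) / 2 ∨
        ((∑ i, X i j : ℤ) : ℚ) = ((ℓ : ℚ) - (b : ℚ)) / 2) ∧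
     (∀ j k : Fin m, j ≠ k →
        ((∑ i, X i j * X i k : ℤ) : ℚ) = ((ℓ : ℚ) - (a : ℚ)) / 4 ∨
        ((∑ i, X i j * X i k : ℤ) : ℚ) = ((ℓ : ℚ) - (b : ℚ)) / 4 ∨
        ((∑ i, X i j * X i k : ℤ) : ℚ) = ((ℓ : ℚ) + (a : ℚ) - 2 * (b : ℚ)) / 4 ∨
        ((∑ i, X i j * X i k : ℤ) : ℚ) = ((ℓ : ℚ) + (b : ℚ) - 2 * (a : ℚ)) / 4)) := by
  have hsq : ∀ i j, S i j * S i j = 1 := by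
    intro i j; rcases hS i j with h | h <;> rw [h] <;> norm_num
  have hrowX : ∀ i, 2 * ∑ j, X i j = (m:ℤ) + 1 := by
    intro i
    have h0 := hrowsum i
    rw [Fin.sum_univ_succ, hcol0] at h0
    have e : ∑ j : Fin m, S i (Fin.succ j) = (m:ℤ) - 2 * ∑ j, X i j := by
      rw [Finset.sum_congr rfl fun j _ => hX i j, Finset.sum_sub_distrib,
        ← Finset.mul_sum, Finset.sum_const, Finset.card_univ, Fintype.card_fin, nsmul_eq_mul,
        mul_one]
    rw [e] at h0; linarith
  have key_row : ∀ i i', ∑ j, S i j * S i' j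
      = 4 * (∑ j, X i j * X i' j) - ((m:ℤ) + 1) := by
    intro i i'
    rw [Fin.sum_univ_succ, hcol0, hcol0]
    have e : ∀ j : Fin m, S i (Fin.succ j) * S i' (Fin.succ j)
        = (1 - 2 * X i j - 2 * X i' j) + 4 * (X i j * X i' j) := by
      intro j; rw [hX, hX]; ring
    rw [Finset.sum_congr rfl fun j _ => e j, Finset.sum_add_distrib, Finset.sum_sub_distrib,
      Finset.sum_sub_distrib, ← Finset.mul_sum, ← Finset.mul_sum, ← Finset.mul_sum,
      Finset.sum_const, Finset.card_univ, Fintype.card_fin, nsmul_eq_mul, mul_one]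
    have h1 := hrowX i; have h2 := hrowX i'
    linarith
  have key_col0 : ∀ j : Fin m, ∑ i, S i 0 * S i (Fin.succ j)
      = (ℓ:ℤ) - 2 * ∑ i, X i j := by
    intro j
    have e : ∀ i : Fin ℓ, S i 0 * S i (Fin.succ j) = 1 - 2 * X i j := by
      intro i; rw [hcol0, hX]; ring
    rw [Finset.sum_congr rfl fun i _ => e i, Finset.sum_sub_distrib, ← Finset.mul_sum,
      Finset.sum_const, Finset.card_univ, Fintype.card_fin, nsmul_eq_mul, mul_one]
  have key_cc : ∀ j k : Fin m, ∑ i, S i (Fin.succ j) * S i (Fin.succ k)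
      = (ℓ:ℤ) - 2 * ∑ i, X i j - 2 * ∑ i, X i k + 4 * ∑ i, X i j * X i k := by
    intro j k
    have e : ∀ i : Fin ℓ, S i (Fin.succ j) * S i (Fin.succ k)
        = (1 - 2 * X i j - 2 * X i k) + 4 * (X i j * X i k) := by
      intro i; rw [hX, hX]; ring
    rw [Finset.sum_congr rfl fun i _ => e i, Finset.sum_add_distrib, Finset.sum_sub_distrib,
      Finset.sum_sub_distrib, ← Finset.mul_sum, ← Finset.mul_sum, ← Finset.mul_sum,
      Finset.sum_const, Finset.card_univ, Fintype.card_fin, nsmul_eq_mul, mul_one]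
    try ring
  have gdiag : ∀ j : Fin (m+1), ∑ i, S i j * S i j = (ℓ:ℤ) := by
    intro j
    rw [Finset.sum_congr rfl fun i _ => hsq i j]
    simp [Finset.sum_const, Finset.card_univ]
  have gsymm : ∀ j k : Fin (m+1), ∑ i, S i j * S i k = ∑ i, S i k * S i j := by
    intro j k; exact Finset.sum_congr rfl fun i _ => mul_comm _ _
  constructor
  · -- forward
    rintro ⟨hmat, hdot⟩
    have horth : ∀ i i', ∑ k, S i k * S i' k = if i = i' then ((m:ℤ)+1) else 0 := by
      intro i i'
      have h := congrFun (congrFun hmat i) i'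
      simp only [Matrix.mul_apply, Matrix.transpose_apply, Matrix.smul_apply,
        Matrix.one_apply, smul_eq_mul] at h
      rw [h]
      split_ifs <;> push_cast <;> try ring
    refine ⟨?_, ?_, ?_⟩
    · intro i i' hii
      have h0 := horth i i'
      rw [if_neg hii, key_row] at h0
      exact aux_q4_of_int _ ((m:ℤ)+1) (by linarith) |>.trans (by push_cast; ring)
    · intro j
      have hd := hdot 0 (Fin.succ j) (Fin.succ_ne_zero j).symm
      rw [key_col0 j] at hd
      rcases hd with h | h
      · left
        exact aux_q2_of_int _ ((ℓ:ℤ) - a) (by linarith) |>.trans (by push_cast; ring)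
      · right
        exact aux_q2_of_int _ ((ℓ:ℤ) - b) (by linarith) |>.trans (by push_cast; ring)
    · intro j k hjk
      have hsne : Fin.succ j ≠ Fin.succ k := fun h => hjk (Fin.succ_injective _ h)
      have hd := hdot (Fin.succ j) (Fin.succ k) hsne
      rw [key_cc j k] at hd
      have hdj := hdot 0 (Fin.succ j) (Fin.succ_ne_zero j).symm
      rw [key_col0 j] at hdj
      have hdk := hdot 0 (Fin.succ k) (Fin.succ_ne_zero k).symm
      rw [key_col0 k] at hdk
      rcases hdj with h1 | h1 <;> rcases hdk with h2 | h2 <;> rcases hd with h3 | h3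
      · exact Or.inl (aux_q4_of_int _ ((ℓ:ℤ) - a) (by linarith) |>.trans (by push_cast; ring))
      · exact Or.inr (Or.inr (Or.inr
          (aux_q4_of_int _ ((ℓ:ℤ) + b - 2*a) (by linarith) |>.trans (by push_cast; ring))))
      · exact Or.inr (Or.inl
          (aux_q4_of_int _ ((ℓ:ℤ) - b) (by linarith) |>.trans (by push_cast; ring)))
      · exact Or.inl (aux_q4_of_int _ ((ℓ:ℤ) - a) (by linarith) |>.trans (by push_cast; ring))
      · exact Or.inr (Or.inl
          (aux_q4_of_int _ ((ℓ:ℤ) - b) (by linarith) |>.trans (by push_cast; ring)))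
      · exact Or.inl (aux_q4_of_int _ ((ℓ:ℤ) - a) (by linarith) |>.trans (by push_cast; ring))
      · exact Or.inr (Or.inr (Or.inl
          (aux_q4_of_int _ ((ℓ:ℤ) + a - 2*b) (by linarith) |>.trans (by push_cast; ring))))
      · exact Or.inr (Or.inl
          (aux_q4_of_int _ ((ℓ:ℤ) - b) (by linarith) |>.trans (by push_cast; ring)))
  · -- backward
    rintro ⟨h1, h2, h3⟩
    have hP : ∀ i i', i ≠ i' → 4 * (∑ j, X i j * X i' j) = (m:ℤ) + 1 := by
      intro i i' hii
      exact aux_int_of_q4 _ _ ((h1 i i' hii).trans (by push_cast; ring))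
    have ht : ∀ j : Fin m, (ℓ:ℤ) - 2 * ∑ i, X i j = a ∨ (ℓ:ℤ) - 2 * ∑ i, X i j = b := by
      intro j
      rcases h2 j with h | h
      · left
        have := aux_int_of_q2 _ ((ℓ:ℤ) - a) (h.trans (by push_cast; ring))
        linarith
      · right
        have := aux_int_of_q2 _ ((ℓ:ℤ) - b) (h.trans (by push_cast; ring))
        linarith
    have hQ : ∀ j k : Fin m, j ≠ k →
        4 * ∑ i, X i j * X i k = (ℓ:ℤ) - a ∨ 4 * ∑ i, X i j * X i k = (ℓ:ℤ) - b ∨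
        4 * ∑ i, X i j * X i k = (ℓ:ℤ) + a - 2*b ∨
        4 * ∑ i, X i j * X i k = (ℓ:ℤ) + b - 2*a := by
      intro j k hjk
      rcases h3 j k hjk with h | h | h | h
      · exact Or.inl (aux_int_of_q4 _ _ (h.trans (by push_cast; ring)))
      · exact Or.inr (Or.inl (aux_int_of_q4 _ _ (h.trans (by push_cast; ring))))
      · exact Or.inr (Or.inr (Or.inl (aux_int_of_q4 _ _ (h.trans (by push_cast; ring)))))
      · exact Or.inr (Or.inr (Or.inr (aux_int_of_q4 _ _ (h.trans (by push_cast; ring)))))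
    have horth : ∀ i i', ∑ k, S i k * S i' k = if i = i' then ((m:ℤ)+1) else 0 := by
      intro i i'
      by_cases hii : i = i'
      · subst hii
        rw [if_pos rfl, Finset.sum_congr rfl fun k _ => hsq i k]
        simp [Finset.sum_const, Finset.card_univ]
      · rw [if_neg hii, key_row]
        have := hP i i' hii
        linarith
    have hFI0 : ∀ j : Fin (m+1), ∑ k, (∑ i, S i j * S i k) = 0 := by
      intro j
      rw [Finset.sum_comm]
      apply Finset.sum_eq_zero
      intro i _
      rw [← Finset.mul_sum, hrowsum, mul_zero]
    have hFI1 : ∀ j : Fin (m+1), ∑ k, (∑ i, S i j * S i k)^2 = ((m:ℤ)+1) * ℓ :=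
      aux_frame_sq ((m:ℤ)+1) S hsq horth
    have hVI : ((m:ℤ)+1)*ℓ - (ℓ:ℤ)*ℓ + (a+b)*ℓ + (m:ℤ)*(a*b) = 0 := by
      have s0 := hFI0 0
      rw [Fin.sum_univ_succ] at s0
      simp only [gdiag, key_col0] at s0
      have s1 := hFI1 0
      rw [Fin.sum_univ_succ] at s1
      simp only [gdiag, key_col0] at s1
      have hz : ∑ k : Fin m, (((ℓ:ℤ) - 2 * ∑ i, X i k) - a) * (((ℓ:ℤ) - 2 * ∑ i, X i k) - b)
          = 0 := by
        apply Finset.sum_eq_zero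
        intro k _
        rcases ht k with h | h <;> rw [h] <;> ring
      have e : ∑ k : Fin m, (((ℓ:ℤ) - 2 * ∑ i, X i k) - a) * (((ℓ:ℤ) - 2 * ∑ i, X i k) - b)
          = ∑ k : Fin m, ((ℓ:ℤ) - 2 * ∑ i, X i k)^2
            - (a+b) * ∑ k : Fin m, ((ℓ:ℤ) - 2 * ∑ i, X i k) + m * (a*b) :=
        aux_expand_sum a b _
      rw [hz] at e
      have hs : ∑ k : Fin m, ((ℓ:ℤ) - 2 * ∑ i, X i k) = -(ℓ:ℤ) := by linarith
      have hss : ∑ k : Fin m, ((ℓ:ℤ) - 2 * ∑ i, X i k)^2 = ((m:ℤ)+1)*ℓ - (ℓ:ℤ)^2 := by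
        nlinarith [s1]
      rw [hs, hss] at e
      linear_combination -e
    -- main pairwise result for succ columns
    have hmain : ∀ j k : Fin m, j ≠ k →
        (∑ i, S i (Fin.succ j) * S i (Fin.succ k)) = a ∨
        (∑ i, S i (Fin.succ j) * S i (Fin.succ k)) = b := by
      intro j k hjk
      have s0 := hFI0 (Fin.succ j)
      rw [Fin.sum_univ_succ] at s0
      rw [gsymm (Fin.succ j) 0, key_col0 j] at s0
      have s1 := hFI1 (Fin.succ j)
      rw [Fin.sum_univ_succ] at s1
      rw [gsymm (Fin.succ j) 0, key_col0 j] at s1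
      have e : ∑ k' : Fin m, ((∑ i, S i (Fin.succ j) * S i (Fin.succ k')) - a)
            * ((∑ i, S i (Fin.succ j) * S i (Fin.succ k')) - b)
          = ∑ k' : Fin m, (∑ i, S i (Fin.succ j) * S i (Fin.succ k'))^2
            - (a+b) * ∑ k' : Fin m, (∑ i, S i (Fin.succ j) * S i (Fin.succ k'))
            + m * (a*b) := aux_expand_sum a b _
      have hTsum : ∑ k' : Fin m, ((∑ i, S i (Fin.succ j) * S i (Fin.succ k')) - a)
            * ((∑ i, S i (Fin.succ j) * S i (Fin.succ k')) - b)
          = ((ℓ:ℤ) - a) * ((ℓ:ℤ) - b) := by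
        rcases ht j with h | h <;> rw [h] at s0 s1
        · have hsF : ∑ k' : Fin m, (∑ i, S i (Fin.succ j) * S i (Fin.succ k')) = -a := by
            linarith
          have hssF : ∑ k' : Fin m, (∑ i, S i (Fin.succ j) * S i (Fin.succ k'))^2
              = ((m:ℤ)+1)*ℓ - a^2 := by linarith
          rw [hsF, hssF] at e
          linear_combination e + hVI
        · have hsF : ∑ k' : Fin m, (∑ i, S i (Fin.succ j) * S i (Fin.succ k')) = -b := by
            linarith
          have hssF : ∑ k' : Fin m, (∑ i, S i (Fin.succ j) * S i (Fin.succ k'))^2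
              = ((m:ℤ)+1)*ℓ - b^2 := by linarith
          rw [hsF, hssF] at e
          linear_combination e + hVI
      have hFj : (∑ i, S i (Fin.succ j) * S i (Fin.succ j)) = (ℓ:ℤ) := gdiag (Fin.succ j)
      have hsplit := Finset.add_sum_erase Finset.univ
        (fun k' => ((∑ i, S i (Fin.succ j) * S i (Fin.succ k')) - a)
          * ((∑ i, S i (Fin.succ j) * S i (Fin.succ k')) - b)) (Finset.mem_univ j)
      rw [hTsum, hFj] at hsplit
      have herase : ∑ k' ∈ Finset.univ.erase j,
          ((∑ i, S i (Fin.succ j) * S i (Fin.succ k')) - a)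
            * ((∑ i, S i (Fin.succ j) * S i (Fin.succ k')) - b) = 0 := by
        linarith [hsplit]
      have hnonneg : ∀ k' ∈ Finset.univ.erase j,
          0 ≤ ((∑ i, S i (Fin.succ j) * S i (Fin.succ k')) - a)
            * ((∑ i, S i (Fin.succ j) * S i (Fin.succ k')) - b) := by
        intro k' hk'
        have hne : j ≠ k' := fun h => (Finset.ne_of_mem_erase hk') h.symm
        have hFk : (∑ i, S i (Fin.succ j) * S i (Fin.succ k'))
            = (ℓ:ℤ) - 2 * ∑ i, X i j - 2 * ∑ i, X i k'
              + 4 * ∑ i, X i j * X i k' := key_cc j k'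
        set F := ∑ i, S i (Fin.succ j) * S i (Fin.succ k') with hFdefn
        have hvals : F = a ∨ F = b ∨ F = 2*a - b ∨ F = 2*b - a ∨
            F = 3*a - 2*b ∨ F = 3*b - 2*a := by
          rcases ht j with ha1 | ha1 <;> rcases ht k' with ha2 | ha2 <;>
            rcases hQ j k' hne with ha3 | ha3 | ha3 | ha3 <;>
            first
            | exact Or.inl (by linarith)
            | exact Or.inr (Or.inl (by linarith))
            | exact Or.inr (Or.inr (Or.inl (by linarith)))
            | exact Or.inr (Or.inr (Or.inr (Or.inl (by linarith))))
            | exact Or.inr (Or.inr (Or.inr (Or.inr (Or.inl (by linarith)))))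
            | exact Or.inr (Or.inr (Or.inr (Or.inr (Or.inr (by linarith)))))
        rcases hvals with hv | hv | hv | hv | hv | hv <;> rw [hv] <;>
          nlinarith [sq_nonneg (a - b)]
      have hzero := (Finset.sum_eq_zero_iff_of_nonneg hnonneg).mp herase k
        (Finset.mem_erase.mpr ⟨fun h => hjk h.symm, Finset.mem_univ k⟩)
      rcases mul_eq_zero.mp hzero with h | h
      · exact Or.inl (by linarith [sub_eq_zero.mp h])
      · exact Or.inr (by linarith [sub_eq_zero.mp h])
    refine ⟨?_, ?_⟩
    · ext i i'
      rw [Matrix.mul_apply]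
      simp only [Matrix.transpose_apply, Matrix.smul_apply, Matrix.one_apply, smul_eq_mul]
      rw [horth i i']
      split_ifs <;> push_cast <;> ring
    · intro j k hjk
      rcases Fin.eq_zero_or_eq_succ j with rfl | ⟨j', rfl⟩ <;>
        rcases Fin.eq_zero_or_eq_succ k with rfl | ⟨k', rfl⟩
      · exact absurd rfl hjk
      · rw [key_col0 k']; exact ht k'
      · rw [gsymm (Fin.succ j') 0, key_col0 j']; exact ht j'
      · exact hmain j' k' fun h => hjk (congrArg Fin.succ h)
end

section
/- Suppose H = (H₁; H₂) is a nontrivial BSHM(n,ℓ,a,−a) with respect to H₁ (so 1 < ℓ < n−1). Then a ≠ 0, and: (1) n(ℓ − a²) = ℓ² − a²; (2) a is even, a divides ℓ with ℓ/a an odd integer, and 4a divides n. -/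
open Matrix

/-- A Hadamard matrix of order `n`: entries in `{1,-1}` and `Hᵀ * H = n • 1`. -/
def IsHadamard {n : ℕ} (H : Matrix (Fin n) (Fin n) ℤ) : Prop :=
  (∀ i j, H i j = 1 ∨ H i j = -1) ∧ Hᵀ * H = (n : ℤ) • 1

/-- Dot product of columns `j` and `k` of the submatrix of `H` formed by the rows in `R`. -/
def colDot {n : ℕ} (H : Matrix (Fin n) (Fin n) ℤ) (R : Finset (Fin n)) (j k : Fin n) : ℤ :=
  ∑ i ∈ R, H i j * H i k

/-- `H` is a balanced splittable Hadamard matrix with respect to the submatrix formed by the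
rows in `R`, with values `a, b`. -/
def IsBSHM {n : ℕ} (H : Matrix (Fin n) (Fin n) ℤ) (R : Finset (Fin n)) (a b : ℤ) : Prop :=
  _root_.IsHadamard H ∧ ∀ j k : Fin n, j ≠ k → colDot H R j k = a ∨ colDot H R j k = b

lemma hadamard_rowOrth {n : ℕ} {H : Matrix (Fin n) (Fin n) ℤ} (hH : _root_.IsHadamard H)
    (hn : 0 < n) (i i' : Fin n) : ∑ k, H i k * H i' k = if i = i' then (n:ℤ) else 0 := by
  have hq : (H.map (Int.cast : ℤ → ℚ))ᵀ * (H.map (Int.cast : ℤ → ℚ)) = (n : ℚ) • 1 := by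
    ext j k
    have h := congrFun (congrFun hH.2 j) k
    simp only [Matrix.mul_apply, Matrix.transpose_apply, Matrix.smul_apply,
      Matrix.map_apply] at h ⊢
    rw [show (∑ x, (H x j : ℚ) * (H x k : ℚ)) = ((∑ x, H x j * H x k : ℤ) : ℚ) by
      push_cast; ring_nf]
    rw [h]
    simp [Matrix.one_apply]
  have hn' : (n : ℚ) ≠ 0 := by positivity
  have h1 : ((n : ℚ)⁻¹ • (H.map (Int.cast : ℤ → ℚ))ᵀ) * (H.map (Int.cast : ℤ → ℚ)) = 1 := by
    rw [Matrix.smul_mul, hq, smul_smul, inv_mul_cancel₀ hn', one_smul]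
  have h2 := mul_eq_one_comm.mp h1
  have h3 : (H.map (Int.cast : ℤ → ℚ)) * (H.map (Int.cast : ℤ → ℚ))ᵀ = (n : ℚ) • 1 := by
    have h4 := congrArg (fun M => (n : ℚ) • M) h2
    rw [Matrix.mul_smul, smul_smul, mul_inv_cancel₀ hn', one_smul] at h4
    rw [h4]
  have h := congrFun (congrFun h3 i) i'
  simp only [Matrix.mul_apply, Matrix.transpose_apply, Matrix.smul_apply,
    Matrix.map_apply, Matrix.one_apply] at h
  have h5 : ((∑ k, H i k * H i' k : ℤ) : ℚ) = if i = i' then (n:ℚ) else 0 := by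
    push_cast
    rw [h]
    split <;> simp
  apply @Int.cast_injective ℚ _
  rw [h5]
  split <;> simp

lemma keyM {n : ℕ} {H : Matrix (Fin n) (Fin n) ℤ} {R : Finset (Fin n)}
    (horth : ∀ i i' : Fin n, ∑ k, H i k * H i' k = if i = i' then (n:ℤ) else 0)
    (j k : Fin n) :
    ∑ m, colDot H R j m * colDot H R m k = (n : ℤ) * colDot H R j k := by
  unfold colDot
  have step1 : ∀ m : Fin n, (∑ i ∈ R, H i j * H i m) * (∑ i' ∈ R, H i' m * H i' k)
      = ∑ i ∈ R, ∑ i' ∈ R, (H i j * H i' k) * (H i m * H i' m) := by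
    intro m
    rw [Finset.sum_mul_sum]
    apply Finset.sum_congr rfl; intro i _
    apply Finset.sum_congr rfl; intro i' _
    ring
  simp only [step1]
  rw [Finset.sum_comm]
  have step2 : ∀ i ∈ R, ∑ i' ∈ R, ∑ m, ((H i j * H i' k) * (H i m * H i' m))
      = H i j * H i k * n := by
    intro i hi
    have : ∀ i' : Fin n, ∑ m, ((H i j * H i' k) * (H i m * H i' m))
        = (H i j * H i' k) * (if i = i' then (n:ℤ) else 0) := by
      intro i'
      rw [← Finset.mul_sum, horth i i']
    simp only [this, mul_ite, mul_zero]
    rw [Finset.sum_ite_eq R i (fun i' => H i j * H i' k * n)]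
    simp [hi]
  calc ∑ i ∈ R, ∑ m, ∑ i' ∈ R, ((H i j * H i' k) * (H i m * H i' m))
      = ∑ i ∈ R, ∑ i' ∈ R, ∑ m, ((H i j * H i' k) * (H i m * H i' m)) := by
        apply Finset.sum_congr rfl; intro i _; exact Finset.sum_comm
    _ = ∑ i ∈ R, H i j * H i k * n := Finset.sum_congr rfl step2
    _ = n * ∑ i ∈ R, H i j * H i k := by
        rw [Finset.mul_sum]; apply Finset.sum_congr rfl; intros; ring

lemma colsum {n : ℕ} {H : Matrix (Fin n) (Fin n) ℤ} {R : Finset (Fin n)}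
    (hE : ∀ i j, H i j = 1 ∨ H i j = -1)
    (horth : ∀ i i' : Fin n, ∑ k, H i k * H i' k = if i = i' then (n:ℤ) else 0)
    (i₀ j : Fin n) :
    ∑ k, (H i₀ j * H i₀ k) * colDot H R j k = if i₀ ∈ R then (n : ℤ) else 0 := by
  unfold colDot
  have hsq : H i₀ j * H i₀ j = 1 := by rcases hE i₀ j with h | h <;> rw [h] <;> norm_num
  calc ∑ k, (H i₀ j * H i₀ k) * ∑ i ∈ R, H i j * H i k
      = ∑ k, ∑ i ∈ R, (H i₀ j * H i j) * (H i₀ k * H i k) := by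
        apply Finset.sum_congr rfl; intro m _
        rw [Finset.mul_sum]
        apply Finset.sum_congr rfl; intros; ring
    _ = ∑ i ∈ R, ∑ k, (H i₀ j * H i j) * (H i₀ k * H i k) := Finset.sum_comm
    _ = ∑ i ∈ R, (H i₀ j * H i j) * (if i₀ = i then (n:ℤ) else 0) := by
        apply Finset.sum_congr rfl; intro i _
        rw [← Finset.mul_sum, horth i₀ i]
    _ = if i₀ ∈ R then (n : ℤ) else 0 := by
        simp only [mul_ite, mul_zero]
        rw [Finset.sum_ite_eq R i₀ (fun i => H i₀ j * H i j * n)]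
        split <;> simp [hsq]

lemma pm_sum {ι : Type*} [DecidableEq ι] (a : ℤ) (s : Finset ι) (f : ι → ℤ)
    (h : ∀ k ∈ s, f k = a ∨ f k = -a) :
    ∃ m : ℤ, ∑ k ∈ s, f k = a * m ∧ 2 ∣ m - s.card := by
  induction s using Finset.induction_on with
  | empty => exact ⟨0, by simp⟩
  | @insert x s hx ih =>
    obtain ⟨m, hm, hd⟩ := ih (fun k hk => h k (Finset.mem_insert_of_mem hk))
    rcases h x (Finset.mem_insert_self x s) with hfx | hfx
    · refine ⟨m + 1, ?_, ?_⟩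
      · rw [Finset.sum_insert hx, hm, hfx]; ring
      · rw [Finset.card_insert_of_notMem hx]; push_cast; omega
    · refine ⟨m - 1, ?_, ?_⟩
      · rw [Finset.sum_insert hx, hm, hfx]; ring
      · rw [Finset.card_insert_of_notMem hx]; push_cast; omega

lemma colDot_symm {n : ℕ} (H : Matrix (Fin n) (Fin n) ℤ) (R : Finset (Fin n)) (j k : Fin n) :
    colDot H R j k = colDot H R k j := by
  unfold colDot; apply Finset.sum_congr rfl; intros; ring

lemma colDot_self {n : ℕ} {H : Matrix (Fin n) (Fin n) ℤ} (R : Finset (Fin n))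
    (hE : ∀ i j, H i j = 1 ∨ H i j = -1) (j : Fin n) :
    colDot H R j j = R.card := by
  unfold colDot
  rw [show (R.card : ℤ) = ∑ _i ∈ R, (1:ℤ) by simp]
  apply Finset.sum_congr rfl; intro i _
  rcases hE i j with h | h <;> rw [h] <;> norm_num

lemma colDot_abs_le {n : ℕ} {H : Matrix (Fin n) (Fin n) ℤ} (R : Finset (Fin n))
    (hE : ∀ i j, H i j = 1 ∨ H i j = -1) (j k : Fin n) :
    |colDot H R j k| ≤ R.card := by
  unfold colDot
  calc |∑ i ∈ R, H i j * H i k| ≤ ∑ i ∈ R, |H i j * H i k| := Finset.abs_sum_le_sum_abs _ _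
    _ = R.card := by
        rw [show (R.card : ℤ) = ∑ _i ∈ R, (1:ℤ) by simp]
        apply Finset.sum_congr rfl; intro i _
        rcases hE i j with h | h <;> rcases hE i k with h' | h' <;> rw [h, h'] <;> norm_num

lemma triple4 {n : ℕ} {H : Matrix (Fin n) (Fin n) ℤ} (R : Finset (Fin n))
    (hE : ∀ i j, H i j = 1 ∨ H i j = -1) (j k m : Fin n) :
    (4:ℤ) ∣ ((R.card : ℤ) + colDot H R j k + colDot H R j m + colDot H R k m) := by
  have h : ((R.card : ℤ) + colDot H R j k + colDot H R j m + colDot H R k m)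
      = ∑ i ∈ R, (1 + H i j * H i k + H i j * H i m + H i k * H i m) := by
    unfold colDot
    rw [Finset.sum_add_distrib, Finset.sum_add_distrib, Finset.sum_add_distrib]
    simp
  rw [h]
  apply Finset.dvd_sum
  intro i _
  rcases hE i j with h1 | h1 <;> rcases hE i k with h2 | h2 <;> rcases hE i m with h3 | h3 <;>
    rw [h1, h2, h3] <;> norm_num

lemma signprod {a L x1 x2 x3 y1 y2 y3 : ℤ} (hodd : ¬ 2 ∣ a)
    (hx1 : x1 = a ∨ x1 = -a) (hx2 : x2 = a ∨ x2 = -a) (hx3 : x3 = a ∨ x3 = -a)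
    (hy1 : y1 = a ∨ y1 = -a) (hy2 : y2 = a ∨ y2 = -a) (hy3 : y3 = a ∨ y3 = -a)
    (t1 : 4 ∣ L + x1 + x2 + x3) (t2 : 4 ∣ L + y1 + y2 + y3) :
    x1 * x2 * x3 = y1 * y2 * y3 := by
  rcases hx1 with h | h <;> subst h <;> rcases hx2 with h | h <;> subst h <;>
    rcases hx3 with h | h <;> subst h <;> rcases hy1 with h | h <;> subst h <;>
    rcases hy2 with h | h <;> subst h <;> rcases hy3 with h | h <;> subst h <;>
    first
      | ring1
      | (exfalso; omega)

lemma arith1 {L N : ℤ} (hL2 : 2 ≤ L) (hLN : L + 2 ≤ N)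
    (hD : L * (N - L) = (N - 1) * ((N - L) * (N - L))) : False := by
  nlinarith [hD,
    mul_pos (show (0:ℤ) < 2 * (N - 1) - L by linarith)
      (show (0:ℤ) < N - L by linarith),
    mul_nonneg (mul_nonneg (show (0:ℤ) ≤ N - 1 by linarith)
      (show (0:ℤ) ≤ N - L by linarith)) (show (0:ℤ) ≤ N - L - 2 by linarith)]

lemma arith2 {L a : ℤ} (haL : a ^ 2 < L) (hL2 : 2 ≤ L) (hcsq : L ^ 2 = a ^ 2) : False := by
  nlinarith

theorem stmt4 {n ℓ : ℕ} (a : ℤ) (H : Matrix (Fin n) (Fin n) ℤ)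
    (R : Finset (Fin n)) (hR : R.card = ℓ) (h1 : 1 < ℓ) (h2 : ℓ < n - 1)
    (hbshm : IsBSHM H R a (-a)) :
    a ≠ 0 ∧
    (n : ℤ) * ((ℓ : ℤ) - a ^ 2) = (ℓ : ℤ) ^ 2 - a ^ 2 ∧
    2 ∣ a ∧ a ∣ (ℓ : ℤ) ∧ Odd ((ℓ : ℤ) / a) ∧ (4 * a) ∣ (n : ℤ) := by
  obtain ⟨hH, hdot⟩ := hbshm
  have hE := hH.1
  have hn4 : 4 ≤ n := by omega
  have hL2 : (2:ℤ) ≤ (ℓ:ℤ) := by omega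
  have hLN : (ℓ:ℤ) + 2 ≤ (n:ℤ) := by omega
  have horth := hadamard_rowOrth hH (by omega)
  have hself : ∀ j, colDot H R j j = (ℓ:ℤ) := by
    intro j; rw [colDot_self R hE j, hR]
  -- distinguished indices
  -- distinguished indices
  let e0 : Fin n := ⟨0, by omega⟩
  let e1 : Fin n := ⟨1, by omega⟩
  let e2 : Fin n := ⟨2, by omega⟩
  let e3 : Fin n := ⟨3, by omega⟩
  have h01 : e0 ≠ e1 := by simp [e0, e1, Fin.ext_iff]
  have h02 : e0 ≠ e2 := by simp [e0, e2, Fin.ext_iff]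
  have h03 : e0 ≠ e3 := by simp [e0, e3, Fin.ext_iff]
  have h12 : e1 ≠ e2 := by simp [e1, e2, Fin.ext_iff]
  have h13 : e1 ≠ e3 := by simp [e1, e3, Fin.ext_iff]
  have h23 : e2 ≠ e3 := by simp [e2, e3, Fin.ext_iff]
  -- equation (1)
  have hcard_erase : (((Finset.univ : Finset (Fin n)).erase e0).card : ℤ) = (n:ℤ) - 1 := by
    rw [Finset.card_erase_of_mem (Finset.mem_univ e0), Finset.card_univ, Fintype.card_fin]
    omega
  have heq1 : (n:ℤ) * ((ℓ:ℤ) - a ^ 2) = (ℓ:ℤ) ^ 2 - a ^ 2 := by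
    have hk := keyM (R := R) horth e0 e0
    have hsq : ∀ m, colDot H R e0 m * colDot H R m e0 = (colDot H R e0 m) ^ 2 := by
      intro m; rw [colDot_symm H R m e0]; ring
    simp only [hsq, hself e0] at hk
    have hsplit := Finset.sum_erase_add Finset.univ (fun m => (colDot H R e0 m) ^ 2)
      (Finset.mem_univ e0)
    have hconst : ∑ m ∈ (Finset.univ : Finset (Fin n)).erase e0, (colDot H R e0 m) ^ 2
        = ((n:ℤ) - 1) * a ^ 2 := by
      rw [← hcard_erase, Finset.card_eq_sum_ones, Nat.cast_sum]
      rw [Finset.sum_mul]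
      apply Finset.sum_congr rfl
      intro m hm
      have hm0 : e0 ≠ m := fun h => (Finset.mem_erase.mp hm).1 h.symm
      rcases hdot e0 m hm0 with h | h <;> rw [h] <;> ring
    rw [← hsplit, hconst] at hk
    simp only [hself e0] at hk
    linarith
  -- a ≠ 0
  have ha0 : a ≠ 0 := by
    intro h
    rw [h] at heq1
    simp at heq1
    nlinarith [heq1, hL2, hLN, mul_le_mul_of_nonneg_right hLN (by linarith : (0:ℤ) ≤ (ℓ:ℤ))]
  -- a^2 ≤ (ℓ:ℤ)^2
  have habs : a ^ 2 ≤ (ℓ:ℤ) ^ 2 := by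
    have h := colDot_abs_le R hE e0 e1
    rw [hR] at h
    rcases hdot e0 e1 h01 with hv | hv <;> rw [hv] at h <;>
      · rw [abs_le] at h; nlinarith [h.1, h.2]
  -- a^2 < (ℓ:ℤ)
  have haL : a ^ 2 < (ℓ:ℤ) := by
    by_contra hcon
    push_neg at hcon
    rcases lt_or_eq_of_le hcon with hlt | heqc
    · nlinarith [heq1, habs, hL2, hLN, hlt,
        mul_nonpos_of_nonneg_of_nonpos (by linarith : (0:ℤ) ≤ (n:ℤ) - ((ℓ:ℤ) + 2))
          (by linarith : (ℓ:ℤ) - a ^ 2 ≤ 0)]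
    · rw [← heqc] at heq1
      nlinarith [heq1, hL2]
  -- the pair contradiction lemma
  have hpairC : ∀ j k : Fin n, j ≠ k →
      (∀ m, m ≠ j → m ≠ k → colDot H R m j = colDot H R m k) → False := by
    intro j k hjk hagree
    set c := colDot H R j k with hc
    clear_value c
    have hcsq : c ^ 2 = a ^ 2 := by
      rcases hdot j k hjk with h | h <;> rw [← hc] at h <;> rw [h] <;> ring
    have hk1 := keyM (R := R) horth j j
    have hk2 := keyM (R := R) horth j k
    have hgsum : ∑ m, (colDot H R j m * colDot H R m j - colDot H R j m * colDot H R m k)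
        = (n:ℤ) * (ℓ:ℤ) - (n:ℤ) * c := by
      rw [Finset.sum_sub_distrib, hk1, hk2, hself j, ← hc]
    have hzero : ∀ m ∈ (Finset.univ : Finset (Fin n)), m ∉ ({j, k} : Finset (Fin n)) →
        colDot H R j m * colDot H R m j - colDot H R j m * colDot H R m k = 0 := by
      intro m _ hm
      simp only [Finset.mem_insert, Finset.mem_singleton] at hm
      push_neg at hm
      rw [hagree m hm.1 hm.2]
      ring
    have hgsum2 : ∑ m, (colDot H R j m * colDot H R m j - colDot H R j m * colDot H R m k)
        = ((ℓ:ℤ) * ((ℓ:ℤ) - c)) + (c * (c - (ℓ:ℤ))) := by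
      rw [← Finset.sum_subset (Finset.subset_univ ({j, k} : Finset (Fin n))) hzero]
      rw [Finset.sum_pair hjk]
      rw [hself j, hself k, ← hc, colDot_symm H R k j, ← hc]
      ring
    have hfac : ((ℓ:ℤ) - c) * ((ℓ:ℤ) - c - (n:ℤ)) = 0 := by linear_combination hgsum - hgsum2
    rcases mul_eq_zero.mp hfac with h | h
    · have hcL : c = (ℓ:ℤ) := by linarith
      rw [hcL] at hcsq
      exact arith2 haL hL2 hcsq
    · have hc2 : a ^ 2 = ((ℓ:ℤ) - (n:ℤ)) ^ 2 := by
        have hcLN : c = (ℓ:ℤ) - (n:ℤ) := by linarith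
        rw [← hcsq, hcLN]
      have hD : (ℓ:ℤ) * ((n:ℤ) - (ℓ:ℤ)) = ((n:ℤ) - 1) * (((n:ℤ) - (ℓ:ℤ)) * ((n:ℤ) - (ℓ:ℤ))) := by
        linear_combination heq1 + ((n:ℤ) - 1) * hc2
      exact arith1 hL2 hLN hD
  -- a is even
  have ha2 : 2 ∣ a := by
    by_contra hodd
    have htr : ∀ j k m : Fin n,
        (4:ℤ) ∣ ((ℓ:ℤ) + colDot H R j k + colDot H R j m + colDot H R k m) := by
      intro j k m
      have h := triple4 R hE j k m
      rwa [hR] at h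
    have hPc : ∀ j k m j' k' m' : Fin n, j ≠ k → j ≠ m → k ≠ m →
        j' ≠ k' → j' ≠ m' → k' ≠ m' →
        colDot H R j k * colDot H R j m * colDot H R k m
          = colDot H R j' k' * colDot H R j' m' * colDot H R k' m' := by
      intro j k m j' k' m' hjk hjm hkm hjk' hjm' hkm'
      exact signprod hodd (hdot j k hjk) (hdot j m hjm) (hdot k m hkm)
        (hdot j' k' hjk') (hdot j' m' hjm') (hdot k' m' hkm') (htr j k m) (htr j' k' m')
    obtain ⟨j, k, hj0, hk0, hjk, heq0⟩ : ∃ j k : Fin n, j ≠ e0 ∧ k ≠ e0 ∧ j ≠ k ∧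
        colDot H R e0 j = colDot H R e0 k := by
      rcases hdot e0 e1 h01 with v1 | v1 <;> rcases hdot e0 e2 h02 with v2 | v2 <;>
        rcases hdot e0 e3 h03 with v3 | v3 <;>
        first
          | exact ⟨e1, e2, h01.symm, h02.symm, h12, v1.trans v2.symm⟩
          | exact ⟨e1, e3, h01.symm, h03.symm, h13, v1.trans v3.symm⟩
          | exact ⟨e2, e3, h02.symm, h03.symm, h23, v2.trans v3.symm⟩
    apply hpairC j k hjk
    intro m hmj hmk
    by_cases hm0 : m = e0
    · rw [hm0, heq0]
    · have hP := hPc j m e0 k m e0 (Ne.symm hmj) hj0 hm0 (Ne.symm hmk) hk0 hm0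
      have hje : colDot H R j e0 = colDot H R k e0 := by
        rw [colDot_symm H R j e0, colDot_symm H R k e0, heq0]
      rw [hje] at hP
      have hne1 : colDot H R k e0 ≠ 0 := by
        rcases hdot k e0 hk0 with h | h <;> rw [h] <;> simpa using ha0
      have hne2 : colDot H R m e0 ≠ 0 := by
        rcases hdot m e0 hm0 with h | h <;> rw [h] <;> simpa using ha0
      have hjm : colDot H R j m = colDot H R k m := by
        have h' : colDot H R j m * (colDot H R k e0 * colDot H R m e0)
            = colDot H R k m * (colDot H R k e0 * colDot H R m e0) := by
          linear_combination hP
        exact mul_right_cancel₀ (mul_ne_zero hne1 hne2) h'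
      rw [colDot_symm H R m j, colDot_symm H R m k, hjm]
  -- n is even
  have hNeven : (2:ℤ) ∣ (n:ℤ) := by
    obtain ⟨m, hm, hd⟩ := pm_sum 1 Finset.univ (fun k => H e0 k * H e1 k)
      (fun k _ => by
        rcases hE e0 k with p | p <;> rcases hE e1 k with q | q <;>
          simp only [p, q] <;> norm_num)
    rw [horth e0 e1, if_neg h01] at hm
    rw [Finset.card_univ, Fintype.card_fin] at hd
    omega
  -- pick rows outside and inside R
  obtain ⟨i₀, hi₀⟩ : ∃ i₀ : Fin n, i₀ ∉ R := by
    by_contra hcon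
    push_neg at hcon
    have huniv : R = Finset.univ := Finset.eq_univ_iff_forall.mpr hcon
    rw [huniv, Finset.card_univ, Fintype.card_fin] at hR
    omega
  obtain ⟨i₁, hi₁⟩ : ∃ i₁ : Fin n, i₁ ∈ R := Finset.card_pos.mp (by omega)
  have hgetsum : ∀ i₀' : Fin n, ∃ m : ℤ,
      (if i₀' ∈ R then (n:ℤ) else 0) = (ℓ:ℤ) + a * m ∧ 2 ∣ m - ((n:ℤ) - 1) := by
    intro i₀'
    have hcs := colsum (R := R) hE horth i₀' e0
    obtain ⟨m, hm, hd⟩ := pm_sum a ((Finset.univ : Finset (Fin n)).erase e0)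
      (fun k => (H i₀' e0 * H i₀' k) * colDot H R e0 k)
      (fun k hk => by
        have hk0 : e0 ≠ k := fun h => (Finset.mem_erase.mp hk).1 h.symm
        rcases hE i₀' e0 with p | p <;> rcases hE i₀' k with q | q <;>
          rcases hdot e0 k hk0 with r | r <;>
          simp only [p, q, r] <;> first | (left; ring1) | (right; ring1))
    have hsplit := Finset.sum_erase_add Finset.univ
      (fun k => (H i₀' e0 * H i₀' k) * colDot H R e0 k) (Finset.mem_univ e0)
    have hsq : H i₀' e0 * H i₀' e0 = 1 := by
      rcases hE i₀' e0 with p | p <;> rw [p] <;> norm_num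
    rw [hm, hsq, hself e0, one_mul, hcs] at hsplit
    rw [hcard_erase] at hd
    exact ⟨m, by linarith, hd⟩
  obtain ⟨ms, hms, hmsd⟩ := hgetsum i₀
  rw [if_neg hi₀] at hms
  obtain ⟨mt, hmt, hmtd⟩ := hgetsum i₁
  rw [if_pos hi₁] at hmt
  have hsEq : (ℓ:ℤ) = a * (-ms) := by linarith
  have htEq : (n:ℤ) - (ℓ:ℤ) = a * mt := by linarith
  have hsodd : (-ms) % 2 = 1 := by omega
  have htodd : mt % 2 = 1 := by omega
  have hkey0 : (ℓ:ℤ) * ((n:ℤ) - (ℓ:ℤ)) = a ^ 2 * ((n:ℤ) - 1) := by linear_combination heq1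
  have hst : (-ms) * mt = (n:ℤ) - 1 := by
    have h' : a ^ 2 * ((-ms) * mt) = a ^ 2 * ((n:ℤ) - 1) := by
      linear_combination hkey0 - (a * mt) * hsEq - (ℓ:ℤ) * htEq
    exact mul_left_cancel₀ (pow_ne_zero 2 ha0) h'
  refine ⟨ha0, heq1, ha2, ⟨-ms, hsEq⟩, ?_, ?_⟩
  · have hdiv : (ℓ:ℤ) / a = -ms := by rw [hsEq, Int.mul_ediv_cancel_left _ ha0]
    rw [hdiv, Int.odd_iff]
    omega
  · obtain ⟨a', ha'⟩ := ha2
    obtain ⟨s', hs'⟩ : ∃ s', -ms = 2 * s' + 1 := ⟨(-ms - 1) / 2, by omega⟩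
    obtain ⟨t', ht'⟩ : ∃ t', mt = 2 * t' + 1 := ⟨(mt - 1) / 2, by omega⟩
    have hNsum : (n:ℤ) = a * (-ms) + a * mt := by linarith
    have key : (-ms) * mt + 1 = a * ((-ms) + mt) := by linear_combination hst + hNsum
    rw [hs', ht', ha'] at key
    have h2' : 2 * (s' + t' + 1) = 4 * (a' * (s' + t' + 1) - s' * t') := by
      linear_combination key
    obtain ⟨w, hw⟩ : ∃ w, s' + t' + 1 = 2 * w :=
      ⟨a' * (s' + t' + 1) - s' * t', by omega⟩
    refine ⟨w, ?_⟩
    linear_combination hNsum + a * hs' + a * ht' + 2 * a * hw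
end

section
/- Let H be a Hadamard matrix of order n one of whose rows is the all-ones row 𝟙ᵀ. (3) Suppose H = (H₁; 𝟙ᵀ; H₂), where H₁ has ℓ rows, and H is a nontrivial BSHM(n,ℓ,a,−a) with respect to H₁. Then H₁𝟙 = 0; k_a(i) (defined with respect to H₁) is a constant independent of i; and the associated graph of H with respect to H₁ is strongly regular with parameters (v,k,λ,μ) = (n, ((n−1)a−ℓ)/(2a), (n−4)/4 + (n−4ℓ)/(4a), n(a−1)/(4a)). (4) Suppose instead H = (H₁; 𝟙ᵀ; H₂), where H₁ has ℓ−1 rows, and H is a nontrivial BSHM(n,ℓ,a,−a) with respect to the ℓ×n submatrix (H₁; 𝟙ᵀ). Then H₂𝟙 = 0; k_a(i) (defined with respect to (H₁; 𝟙ᵀ)) is a constant independent of i; and the associated graph of H with respect to (H₁; 𝟙ᵀ) is strongly regular with parameters (v,k,λ,μ) = (n, ((n−1)a+n−ℓ)/(2a), (n−4)/4 + (3n−4ℓ)/(4a), n(a+1)/(4a)). -/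
open Matrix Finset

/-- `kA H R a i` is the number of columns `j ≠ i` whose dot product with column `i`
(in the submatrix with rows `R`) equals `a`. -/
def kA {n : ℕ} (H : Matrix (Fin n) (Fin n) ℤ) (R : Finset (Fin n)) (a : ℤ) (i : Fin n) : ℕ :=
  (univ.filter fun j => j ≠ i ∧ colDot H R i j = a).card

/-- The associated graph (vertices `Fin n`, with `i ~ j` iff `i ≠ j` and columns `i`, `j` of the
submatrix with rows `R` have dot product `a`) is strongly regular with parameters
`(v, k, lam, mu)`. -/
def AssociatedGraphIsSRG {n : ℕ} (H : Matrix (Fin n) (Fin n) ℤ) (R : Finset (Fin n)) (a : ℤ)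
    (v k lam mu : ℕ) : Prop :=
  n = v ∧
  (∀ i : Fin n, (univ.filter fun j => i ≠ j ∧ colDot H R i j = a).card = k) ∧
  (∀ i j : Fin n, i ≠ j → colDot H R i j = a →
    (univ.filter fun x =>
      (i ≠ x ∧ colDot H R i x = a) ∧ (j ≠ x ∧ colDot H R j x = a)).card = lam) ∧
  (∀ i j : Fin n, i ≠ j → colDot H R i j ≠ a →
    (univ.filter fun x =>
      (i ≠ x ∧ colDot H R i x = a) ∧ (j ≠ x ∧ colDot H R j x = a)).card = mu)

lemma rowdot {n : ℕ} (H : Matrix (Fin n) (Fin n) ℤ) (hH : _root_.IsHadamard H) (hn : 0 < n) :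
    ∀ r s : Fin n, ∑ x, H r x * H s x = if r = s then (n:ℤ) else 0 := by
  obtain ⟨_, horth⟩ := hH
  have hnq : (n : ℚ) ≠ 0 := by positivity
  set Hq : Matrix (Fin n) (Fin n) ℚ := H.map (Int.cast : ℤ → ℚ) with hHq
  have horthq : Hqᵀ * Hq = (n:ℚ) • 1 := by
    ext i j
    have h := congrFun (congrFun horth i) j
    simp only [Matrix.mul_apply, Matrix.smul_apply, Matrix.one_apply, Matrix.transpose_apply,
      Matrix.map_apply, Hq, smul_eq_mul] at h ⊢
    rcases eq_or_ne i j with hij | hij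
    · subst hij; simp at h ⊢; exact_mod_cast h
    · simp [hij] at h ⊢; exact_mod_cast h
  have h1 : ((n:ℚ)⁻¹ • Hqᵀ) * Hq = 1 := by
    rw [Matrix.smul_mul, horthq, smul_smul, inv_mul_cancel₀ hnq, one_smul]
  have h2 : Hq * ((n:ℚ)⁻¹ • Hqᵀ) = 1 := mul_eq_one_comm.mp h1
  have h3 : Hq * Hqᵀ = (n:ℚ) • 1 := by
    rw [Matrix.mul_smul] at h2
    calc Hq * Hqᵀ = (n:ℚ) • ((n:ℚ)⁻¹ • (Hq * Hqᵀ)) := by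
          rw [smul_smul, mul_inv_cancel₀ hnq, one_smul]
      _ = (n:ℚ) • 1 := by rw [h2]
  intro r s
  have h := congrFun (congrFun h3 r) s
  simp only [Matrix.mul_apply, Matrix.smul_apply, Matrix.one_apply, Matrix.transpose_apply,
    Matrix.map_apply, Hq, smul_eq_mul] at h
  rcases eq_or_ne r s with hrs | hrs
  · subst hrs; simp at h ⊢; exact_mod_cast h
  · simp [hrs] at h ⊢; exact_mod_cast h

lemma key {n ℓ : ℕ} (a : ℤ) (H : Matrix (Fin n) (Fin n) ℤ)
    (R : Finset (Fin n)) (hRcard : R.card = ℓ) (h1 : 1 < ℓ) (h2 : ℓ < n - 1)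
    (hB : IsBSHM H R a (-a)) (s' : ℤ) (hs : s' = 0 ∨ s' = (n:ℤ))
    (hrow : ∀ i, ∑ x, colDot H R i x = s') :
    a ≠ 0 ∧ (∃ c : ℕ, ∀ i, kA H R a i = c) ∧
    ∃ k lam mu : ℕ, AssociatedGraphIsSRG H R a n k lam mu ∧
      2*a*(k:ℤ) = s' - ℓ + a*((n:ℤ)-1) ∧
      4*a*(lam:ℤ) = (n:ℤ) + 2*s' + n*a - 4*ℓ - 4*a ∧
      4*a*(mu:ℤ) = -(n:ℤ) + 2*s' + n*a := by
  obtain ⟨hHad, hvals⟩ := hB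
  have hn4 : 4 ≤ n := by omega
  have hnpos : 0 < n := by omega
  have hrd := rowdot H hHad hnpos
  have hent := hHad.1
  have hMsymm : ∀ i j, colDot H R i j = colDot H R j i := by
    intro i j
    exact Finset.sum_congr rfl (fun r _ => by ring)
  have hdiag : ∀ i, colDot H R i i = (ℓ:ℤ) := by
    intro i
    unfold colDot
    rw [Finset.sum_congr rfl (fun r _ => show H r i * H r i = 1 by
      rcases hent r i with h | h <;> rw [h] <;> ring)]
    simp [hRcard]
  have hE : ∀ i j, ∑ x, colDot H R i x * colDot H R x j = (n:ℤ) * colDot H R i j := by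
    intro i j
    unfold colDot
    have e1 : ∀ x, (∑ r ∈ R, H r i * H r x) * (∑ s ∈ R, H s x * H s j)
        = ∑ r ∈ R, ∑ s ∈ R, (H r i * H s j) * (H r x * H s x) := by
      intro x
      rw [Finset.sum_mul_sum]
      exact Finset.sum_congr rfl fun r _ => Finset.sum_congr rfl fun s _ => by ring
    calc (∑ x, (∑ r ∈ R, H r i * H r x) * (∑ s ∈ R, H s x * H s j))
        = ∑ x, ∑ r ∈ R, ∑ s ∈ R, (H r i * H s j) * (H r x * H s x) := by
          exact Finset.sum_congr rfl fun x _ => e1 x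
      _ = ∑ r ∈ R, ∑ x, ∑ s ∈ R, (H r i * H s j) * (H r x * H s x) := Finset.sum_comm
      _ = ∑ r ∈ R, ∑ s ∈ R, ∑ x, (H r i * H s j) * (H r x * H s x) := by
          exact Finset.sum_congr rfl fun r _ => Finset.sum_comm
      _ = ∑ r ∈ R, ∑ s ∈ R, (H r i * H s j) * (if r = s then (n:ℤ) else 0) := by
          refine Finset.sum_congr rfl fun r _ => Finset.sum_congr rfl fun s _ => ?_
          rw [← Finset.mul_sum, hrd r s]
      _ = ∑ r ∈ R, (H r i * H r j) * n := by
          refine Finset.sum_congr rfl fun r hr => ?_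
          simp only [mul_ite, mul_zero]
          rw [Finset.sum_ite_eq R r (fun s => H r i * H s j * n)]
          simp [hr]
      _ = (n:ℤ) * ∑ r ∈ R, H r i * H r j := by rw [Finset.mul_sum]; exact Finset.sum_congr rfl fun r _ => by ring
  set i₁ : Fin n := ⟨0, hnpos⟩ with hi₁
  have hane : a ≠ 0 := by
    intro ha0
    have h := hE i₁ i₁
    rw [Finset.sum_eq_single i₁ (fun x _ hx => by
        rcases hvals i₁ x (Ne.symm hx) with h | h <;> rw [h, ha0] <;> ring)
      (fun h => absurd (Finset.mem_univ i₁) h)] at h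
    rw [hdiag] at h
    have hl0 : (ℓ:ℤ) ≠ 0 := by exact_mod_cast (by omega : ℓ ≠ 0)
    have h' : (ℓ:ℤ) = n := mul_right_cancel₀ hl0 h
    have : ℓ = n := by exact_mod_cast h'
    omega
  have hGa : ∀ i : Fin n,
      (univ.filter fun j => j ≠ i ∧ colDot H R i j = a)
        = (univ.erase i).filter (fun x => colDot H R i x = a) := by
    intro i
    ext x
    simp only [Finset.mem_filter, Finset.mem_erase, Finset.mem_univ, true_and, and_true,
      and_comm]
  have hG : ∀ i, 2*a*(kA H R a i : ℤ) = s' - ℓ + a*((n:ℤ)-1) := by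
    intro i
    have hsplit : ∑ x ∈ univ.erase i, (colDot H R i x + a) = s' + n*a - (ℓ + a) := by
      rw [Finset.sum_erase_eq_sub (Finset.mem_univ i), Finset.sum_add_distrib, hrow i, hdiag]
      simp [mul_comm]
    rw [← Finset.sum_filter_add_sum_filter_not (univ.erase i) (fun x => colDot H R i x = a)] at hsplit
    have hA : ∑ x ∈ (univ.erase i).filter (fun x => colDot H R i x = a), (colDot H R i x + a)
        = 2*a*(kA H R a i : ℤ) := by
      rw [Finset.sum_congr rfl (fun x hx => show colDot H R i x + a = 2*a by
        rw [(Finset.mem_filter.mp hx).2]; ring)]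
      rw [Finset.sum_const]
      rw [kA, hGa i]
      push_cast
      ring
    have hBz : ∑ x ∈ (univ.erase i).filter (fun x => ¬ colDot H R i x = a), (colDot H R i x + a)
        = 0 := by
      refine Finset.sum_eq_zero fun x hx => ?_
      obtain ⟨hx1, hx2⟩ := Finset.mem_filter.mp hx
      have hix : i ≠ x := Ne.symm (Finset.mem_erase.mp hx1).1
      rcases hvals i x hix with h | h
      · exact absurd h hx2
      · rw [h]; ring
    rw [hA, hBz] at hsplit
    push_cast at hsplit ⊢
    linarith
  have hP : ∀ i j : Fin n, i ≠ j →
      4*a*a*(((univ.filter fun x =>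
        (i ≠ x ∧ colDot H R i x = a) ∧ (j ≠ x ∧ colDot H R j x = a)).card : ℤ))
      = (n:ℤ) * colDot H R i j + 2*a*s' + (n:ℤ)*a*a - 2*((ℓ:ℤ)+a)*(colDot H R i j + a) := by
    intro i j hij
    have htot : ∑ x, (colDot H R i x + a) * (colDot H R x j + a)
        = (n:ℤ) * colDot H R i j + 2*a*s' + (n:ℤ)*a*a := by
      have expand : ∀ x : Fin n, (colDot H R i x + a) * (colDot H R x j + a)
          = colDot H R i x * colDot H R x j + a * colDot H R i x + a * colDot H R x j + a*a := by
        intro x; ring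
      rw [Finset.sum_congr rfl fun x _ => expand x]
      rw [Finset.sum_add_distrib, Finset.sum_add_distrib, Finset.sum_add_distrib]
      rw [hE i j, ← Finset.mul_sum, ← Finset.mul_sum, hrow i]
      have : ∑ x, colDot H R x j = s' := by
        rw [Finset.sum_congr rfl fun x _ => hMsymm x j]; exact hrow j
      rw [this, Finset.sum_const]
      simp only [Finset.card_univ, Fintype.card_fin, nsmul_eq_mul]
      push_cast
      ring
    have hji : j ≠ i := Ne.symm hij
    have hmemi : i ∈ univ.erase j := Finset.mem_erase.mpr ⟨hij, Finset.mem_univ i⟩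
    have hsplit : ∑ x ∈ (univ.erase j).erase i, (colDot H R i x + a) * (colDot H R x j + a)
        = ((n:ℤ) * colDot H R i j + 2*a*s' + (n:ℤ)*a*a)
          - 2*((ℓ:ℤ)+a)*(colDot H R i j + a) := by
      rw [Finset.sum_erase_eq_sub hmemi, Finset.sum_erase_eq_sub (Finset.mem_univ j), htot,
        hdiag, hdiag]
      ring
    have hterm : ∀ x ∈ (univ.erase j).erase i, (colDot H R i x + a) * (colDot H R x j + a)
        = if colDot H R i x = a ∧ colDot H R j x = a then 4*a*a else 0 := by
      intro x hx
      obtain ⟨hxi, hxj⟩ : x ≠ i ∧ x ≠ j := by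
        have := Finset.mem_erase.mp hx
        exact ⟨this.1, (Finset.mem_erase.mp this.2).1⟩
      have hix : i ≠ x := Ne.symm hxi
      have hjx : j ≠ x := Ne.symm hxj
      have hna : ¬ (-a = a) := fun h => hane (by linarith)
      rw [hMsymm x j]
      rcases hvals i x hix with hi' | hi' <;> rcases hvals j x hjx with hj' | hj' <;>
        simp only [hi', hj'] <;> simp [hna] <;> ring
    rw [Finset.sum_congr rfl hterm] at hsplit
    rw [Finset.sum_ite, Finset.sum_const_zero, Finset.sum_const, add_zero] at hsplit
    have hfs : ((univ.erase j).erase i).filter (fun x => colDot H R i x = a ∧ colDot H R j x = a)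
        = univ.filter fun x => (i ≠ x ∧ colDot H R i x = a) ∧ (j ≠ x ∧ colDot H R j x = a) := by
      ext x
      simp only [Finset.mem_filter, Finset.mem_erase, Finset.mem_univ, true_and, and_true]
      constructor
      · rintro ⟨⟨h1', h2'⟩, h3', h4'⟩; exact ⟨⟨Ne.symm h1', h3'⟩, Ne.symm h2', h4'⟩
      · rintro ⟨⟨h1', h2'⟩, h3', h4'⟩; exact ⟨⟨Ne.symm h1', Ne.symm h3'⟩, h2', h4'⟩
    rw [hfs] at hsplit
    rw [nsmul_eq_mul] at hsplit
    linarith [hsplit]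
  have hLam : ∀ i j : Fin n, i ≠ j → colDot H R i j = a →
      4*a*(((univ.filter fun x =>
        (i ≠ x ∧ colDot H R i x = a) ∧ (j ≠ x ∧ colDot H R j x = a)).card : ℤ))
      = (n:ℤ) + 2*s' + n*a - 4*ℓ - 4*a := by
    intro i j hij hadj
    have h := hP i j hij
    rw [hadj] at h
    have : a * (4*a*(((univ.filter fun x =>
        (i ≠ x ∧ colDot H R i x = a) ∧ (j ≠ x ∧ colDot H R j x = a)).card : ℤ)))
        = a * ((n:ℤ) + 2*s' + n*a - 4*ℓ - 4*a) := by linarith [h]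
    exact mul_left_cancel₀ hane this
  have hMu : ∀ i j : Fin n, i ≠ j → colDot H R i j = -a →
      4*a*(((univ.filter fun x =>
        (i ≠ x ∧ colDot H R i x = a) ∧ (j ≠ x ∧ colDot H R j x = a)).card : ℤ))
      = -(n:ℤ) + 2*s' + n*a := by
    intro i j hij hadj
    have h := hP i j hij
    rw [hadj] at h
    have : a * (4*a*(((univ.filter fun x =>
        (i ≠ x ∧ colDot H R i x = a) ∧ (j ≠ x ∧ colDot H R j x = a)).card : ℤ)))
        = a * (-(n:ℤ) + 2*s' + n*a) := by linarith [h]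
    exact mul_left_cancel₀ hane this
  -- facts for existence
  have hl2 : (2:ℤ) ≤ (ℓ:ℤ) := by exact_mod_cast h1
  have hln : (ℓ:ℤ) ≤ (n:ℤ) - 2 := by omega
  have hn1 : (0:ℤ) ≤ (n:ℤ) - 1 := by omega
  have hconst : ∀ i, kA H R a i = kA H R a i₁ := by
    intro i
    have hcc : 2*a*(kA H R a i:ℤ) = 2*a*(kA H R a i₁:ℤ) := by rw [hG i, hG i₁]
    have h2a : (2*a:ℤ) ≠ 0 := mul_ne_zero (by norm_num) hane
    exact_mod_cast mul_left_cancel₀ h2a hcc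
  have hk_ne0 : kA H R a i₁ ≠ 0 := by
    intro h0
    have h := hG i₁
    rw [h0] at h
    push_cast at h
    rcases hs with rfl | rfl <;> rcases lt_or_gt_of_ne hane with ha | ha
    · have hb := mul_le_mul_of_nonneg_right (by linarith : a ≤ -1) hn1
      linarith
    · have hb := mul_le_mul_of_nonneg_right (by linarith : (1:ℤ) ≤ a) hn1
      linarith
    · have hb := mul_le_mul_of_nonneg_right (by linarith : a ≤ -1) hn1
      linarith
    · have hb := mul_le_mul_of_nonneg_right (by linarith : (1:ℤ) ≤ a) hn1
      linarith
  have hk_lt : kA H R a i₁ ≠ n - 1 := by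
    intro h0
    have h := hG i₁
    rw [h0] at h
    have hc : ((n - 1 : ℕ) : ℤ) = (n:ℤ) - 1 := by omega
    rw [hc] at h
    rcases hs with rfl | rfl <;> rcases lt_or_gt_of_ne hane with ha | ha
    · have hb := mul_le_mul_of_nonneg_right (by linarith : a ≤ -1) hn1
      linarith
    · have hb := mul_le_mul_of_nonneg_right (by linarith : (1:ℤ) ≤ a) hn1
      linarith
    · have hb := mul_le_mul_of_nonneg_right (by linarith : a ≤ -1) hn1
      linarith
    · have hb := mul_le_mul_of_nonneg_right (by linarith : (1:ℤ) ≤ a) hn1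
      linarith
  obtain ⟨j₂, hj₂⟩ := Finset.card_pos.mp (Nat.pos_of_ne_zero hk_ne0)
  obtain ⟨-, hj₂i, hj₂a⟩ :
      j₂ ∈ univ ∧ j₂ ≠ i₁ ∧ colDot H R i₁ j₂ = a := by
    simpa [Finset.mem_filter] using hj₂
  have hsub : (univ.filter fun j => j ≠ i₁ ∧ colDot H R i₁ j = a) ⊆ univ.erase i₁ :=
    fun x hx => Finset.mem_erase.mpr ⟨(Finset.mem_filter.mp hx).2.1, Finset.mem_univ x⟩
  have hne_set : (univ.filter fun j => j ≠ i₁ ∧ colDot H R i₁ j = a) ≠ univ.erase i₁ := by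
    intro hEq
    apply hk_lt
    rw [kA, hEq, Finset.card_erase_of_mem (Finset.mem_univ i₁), Finset.card_univ,
      Fintype.card_fin]
  obtain ⟨j₃, hj₃e, hj₃f⟩ := Finset.exists_of_ssubset (hsub.ssubset_of_ne hne_set)
  have hj₃i : j₃ ≠ i₁ := (Finset.mem_erase.mp hj₃e).1
  have hj₃na : colDot H R i₁ j₃ ≠ a := fun hcd =>
    hj₃f (Finset.mem_filter.mpr ⟨Finset.mem_univ _, hj₃i, hcd⟩)
  have hj₃m : colDot H R i₁ j₃ = -a := by
    rcases hvals i₁ j₃ (Ne.symm hj₃i) with h | h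
    · exact absurd h hj₃na
    · exact h
  have h4a : (4*a:ℤ) ≠ 0 := mul_ne_zero (by norm_num) hane
  refine ⟨hane, ⟨kA H R a i₁, hconst⟩,
    kA H R a i₁,
    (univ.filter fun x => (i₁ ≠ x ∧ colDot H R i₁ x = a) ∧ (j₂ ≠ x ∧ colDot H R j₂ x = a)).card,
    (univ.filter fun x => (i₁ ≠ x ∧ colDot H R i₁ x = a) ∧ (j₃ ≠ x ∧ colDot H R j₃ x = a)).card,
    ⟨rfl, ?_, ?_, ?_⟩, hG i₁, hLam i₁ j₂ (Ne.symm hj₂i) hj₂a, hMu i₁ j₃ (Ne.symm hj₃i) hj₃m⟩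
  · intro i
    have hset : (univ.filter fun j => i ≠ j ∧ colDot H R i j = a)
        = (univ.filter fun j => j ≠ i ∧ colDot H R i j = a) := by
      ext x
      simp only [Finset.mem_filter, Finset.mem_univ, true_and]
      exact and_congr_left (fun _ => ne_comm)
    rw [hset]
    exact hconst i
  · intro i j hij hadj
    have h1' := hLam i j hij hadj
    have h2' := hLam i₁ j₂ (Ne.symm hj₂i) hj₂a
    exact_mod_cast mul_left_cancel₀ h4a (h1'.trans h2'.symm)
  · intro i j hij hnadj
    have hm : colDot H R i j = -a := by
      rcases hvals i j hij with h | h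
      · exact absurd h hnadj
      · exact h
    have h1' := hMu i j hij hm
    have h2' := hMu i₁ j₃ (Ne.symm hj₃i) hj₃m
    exact_mod_cast mul_left_cancel₀ h4a (h1'.trans h2'.symm)

theorem stmt5 {n ℓ : ℕ} (a : ℤ) (H : Matrix (Fin n) (Fin n) ℤ)
    (i₀ : Fin n) (hi₀ : ∀ j, H i₀ j = 1)
    (R : Finset (Fin n)) (hRcard : R.card = ℓ) (h1 : 1 < ℓ) (h2 : ℓ < n - 1) :
    (i₀ ∉ R → IsBSHM H R a (-a) →
      (∀ i ∈ R, ∑ j, H i j = 0) ∧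
      (∃ c : ℕ, ∀ i : Fin n, kA H R a i = c) ∧
      (∃ k lam mu : ℕ, AssociatedGraphIsSRG H R a n k lam mu ∧
        (k : ℚ) = (((n : ℚ) - 1) * (a : ℚ) - (ℓ : ℚ)) / (2 * (a : ℚ)) ∧
        (lam : ℚ) = ((n : ℚ) - 4) / 4 + ((n : ℚ) - 4 * (ℓ : ℚ)) / (4 * (a : ℚ)) ∧
        (mu : ℚ) = (n : ℚ) * ((a : ℚ) - 1) / (4 * (a : ℚ)))) ∧
    (i₀ ∈ R → IsBSHM H R a (-a) →
      (∀ i ∈ Rᶜ, ∑ j, H i j = 0) ∧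
      (∃ c : ℕ, ∀ i : Fin n, kA H R a i = c) ∧
      (∃ k lam mu : ℕ, AssociatedGraphIsSRG H R a n k lam mu ∧
        (k : ℚ) = (((n : ℚ) - 1) * (a : ℚ) + (n : ℚ) - (ℓ : ℚ)) / (2 * (a : ℚ)) ∧
        (lam : ℚ) = ((n : ℚ) - 4) / 4 + (3 * (n : ℚ) - 4 * (ℓ : ℚ)) / (4 * (a : ℚ)) ∧
        (mu : ℚ) = (n : ℚ) * ((a : ℚ) + 1) / (4 * (a : ℚ)))) := by
  have hn4 : 4 ≤ n := by omega
  have hnpos : 0 < n := by omega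
  constructor
  · intro hi₀R hB
    have hrd := rowdot H hB.1 hnpos
    have hrs0 : ∀ r : Fin n, r ≠ i₀ → ∑ j, H r j = 0 := by
      intro r hr
      have h := hrd r i₀
      rw [if_neg hr] at h
      simp only [hi₀, mul_one] at h
      exact h
    have hrow : ∀ i, ∑ x, colDot H R i x = 0 := by
      intro i
      unfold colDot
      rw [Finset.sum_comm]
      refine Finset.sum_eq_zero fun r hr => ?_
      rw [← Finset.mul_sum, hrs0 r (fun h => hi₀R (h ▸ hr)), mul_zero]
    obtain ⟨hane, hc, k, lam, mu, hSRG, hk, hlam, hmu⟩ :=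
      key a H R hRcard h1 h2 hB 0 (Or.inl rfl) hrow
    have haq : (a:ℚ) ≠ 0 := Int.cast_ne_zero.mpr hane
    refine ⟨fun i hiR => hrs0 i (fun h => hi₀R (h ▸ hiR)), hc, k, lam, mu, hSRG, ?_, ?_, ?_⟩
    · have hq : 2*(a:ℚ)*(k:ℚ) = 0 - (ℓ:ℚ) + (a:ℚ)*((n:ℚ)-1) := by exact_mod_cast hk
      field_simp
      linear_combination hq
    · have hq : 4*(a:ℚ)*(lam:ℚ) = (n:ℚ) + 2*0 + (n:ℚ)*(a:ℚ) - 4*(ℓ:ℚ) - 4*(a:ℚ) := by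
        exact_mod_cast hlam
      field_simp
      linear_combination hq
    · have hq : 4*(a:ℚ)*(mu:ℚ) = -(n:ℚ) + 2*0 + (n:ℚ)*(a:ℚ) := by exact_mod_cast hmu
      field_simp
      linear_combination hq
  · intro hi₀R hB
    have hrd := rowdot H hB.1 hnpos
    have hrs0 : ∀ r : Fin n, r ≠ i₀ → ∑ j, H r j = 0 := by
      intro r hr
      have h := hrd r i₀
      rw [if_neg hr] at h
      simp only [hi₀, mul_one] at h
      exact h
    have hrow : ∀ i, ∑ x, colDot H R i x = (n:ℤ) := by
      intro i
      unfold colDot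
      rw [Finset.sum_comm]
      rw [Finset.sum_eq_single i₀
        (fun r _ hne => by rw [← Finset.mul_sum, hrs0 r hne, mul_zero])
        (fun h => absurd hi₀R h)]
      rw [← Finset.mul_sum, hi₀ i, one_mul]
      simp [hi₀]
    obtain ⟨hane, hc, k, lam, mu, hSRG, hk, hlam, hmu⟩ :=
      key a H R hRcard h1 h2 hB (n:ℤ) (Or.inr rfl) hrow
    have haq : (a:ℚ) ≠ 0 := Int.cast_ne_zero.mpr hane
    refine ⟨fun i hiR => hrs0 i (fun h => (Finset.mem_compl.mp hiR) (h ▸ hi₀R)), hc,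
      k, lam, mu, hSRG, ?_, ?_, ?_⟩
    · have hq : 2*(a:ℚ)*(k:ℚ) = (n:ℚ) - (ℓ:ℚ) + (a:ℚ)*((n:ℚ)-1) := by exact_mod_cast hk
      field_simp
      linear_combination hq
    · have hq : 4*(a:ℚ)*(lam:ℚ) = (n:ℚ) + 2*(n:ℚ) + (n:ℚ)*(a:ℚ) - 4*(ℓ:ℚ) - 4*(a:ℚ) := by
        exact_mod_cast hlam
      field_simp
      linear_combination hq
    · have hq : 4*(a:ℚ)*(mu:ℚ) = -(n:ℚ) + 2*(n:ℚ) + (n:ℚ)*(a:ℚ) := by exact_mod_cast hmu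
      field_simp
      linear_combination hq
end

section
/- Suppose H = (H₁; H₂) is a nontrivial BSHM(n,ℓ,a,b) with respect to H₁ (so 1 < ℓ < n−1), where b ≠ a and b ≠ −a. Then k_a(i) = (ℓ(n−ℓ) − b²(n−1))/(a² − b²) for every column index i (in particular k_a(i) is independent of i), and exactly one of the following holds: H₁𝟙 = 0 (H has Type 1) or H₂𝟙 = 0 (H has Type 2). -/
open Matrix Finset

lemma sum_sq_expand {β : Type*} [Fintype β] {α : Type*} (T : Finset α)
    (w : α → ℤ) (g : α → β → ℤ) :
    ∑ j : β, (∑ r ∈ T, w r * g r j)^2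
      = ∑ r ∈ T, ∑ t ∈ T, w r * w t * ∑ j, g r j * g t j := by
  have h : ∀ j : β, (∑ r ∈ T, w r * g r j)^2
      = ∑ r ∈ T, ∑ t ∈ T, w r * w t * (g r j * g t j) := by
    intro j
    rw [sq, Finset.sum_mul_sum]
    exact Finset.sum_congr rfl fun r _ => Finset.sum_congr rfl fun t _ => by ring
  simp_rw [h]
  rw [Finset.sum_comm]
  refine Finset.sum_congr rfl fun r _ => ?_
  rw [Finset.sum_comm]
  exact Finset.sum_congr rfl fun t _ => by rw [Finset.mul_sum]

lemma sum_sq_eval {n : ℕ} {α : Type*} [DecidableEq α] (T : Finset α) (w : α → ℤ)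
    (g : α → Fin n → ℤ)
    (horth : ∀ r ∈ T, ∀ t ∈ T, ∑ j, g r j * g t j = if r = t then (n:ℤ) else 0) :
    ∑ j : Fin n, (∑ r ∈ T, w r * g r j)^2 = (n : ℤ) * ∑ r ∈ T, (w r)^2 := by
  rw [sum_sq_expand]
  have h : ∀ r ∈ T, ∑ t ∈ T, w r * w t * ∑ j, g r j * g t j = (n:ℤ) * (w r)^2 := by
    intro r hr
    rw [Finset.sum_eq_single r]
    · rw [horth r hr r hr, if_pos rfl]; ring
    · intro t ht hne
      rw [horth r hr t ht, if_neg (fun h => hne h.symm), mul_zero]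
    · exact fun h => absurd hr h
  rw [Finset.sum_congr rfl h, ← Finset.mul_sum]

theorem stmt6 {n ℓ : ℕ} (a b : ℤ) (H : Matrix (Fin n) (Fin n) ℤ)
    (R : Finset (Fin n)) (hRcard : R.card = ℓ) (h1 : 1 < ℓ) (h2 : ℓ < n - 1)
    (hba : b ≠ a) (hbna : b ≠ -a)
    (hbshm : IsBSHM H R a b) :
    (∀ i : Fin n, (kA H R a i : ℚ) =
      ((ℓ : ℚ) * ((n : ℚ) - (ℓ : ℚ)) - (b : ℚ) ^ 2 * ((n : ℚ) - 1)) /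
        ((a : ℚ) ^ 2 - (b : ℚ) ^ 2)) ∧
    Xor' (∀ i ∈ R, ∑ j, H i j = 0) (∀ i ∈ Rᶜ, ∑ j, H i j = 0) := by
  obtain ⟨⟨hpm, hHtH⟩, hab⟩ := hbshm
  have hn4 : 4 ≤ n := by omega
  have hnz : (n:ℤ) ≠ 0 := by exact_mod_cast (by omega : n ≠ 0)
  have hsq : ∀ r j, H r j * H r j = 1 := by
    intro r j; rcases hpm r j with h|h <;> rw [h] <;> ring
  have hcol : ∀ j k : Fin n, ∑ r, H r j * H r k = if j = k then (n:ℤ) else 0 := by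
    intro j k
    have h := congrFun (congrFun hHtH j) k
    simpa [Matrix.mul_apply, Matrix.transpose_apply, Matrix.one_apply, mul_ite] using h
  -- H * Hᵀ = n • 1 via ℚ
  have hrow : ∀ r t : Fin n, ∑ j, H r j * H t j = if r = t then (n:ℤ) else 0 := by
    set Hq := H.map (Int.cast : ℤ → ℚ) with hHq
    have hnq : (n:ℚ) ≠ 0 := by exact_mod_cast (by omega : n ≠ 0)
    have h1q : Hqᵀ * Hq = (n:ℚ) • 1 := by
      ext j k
      have hcast : ((∑ r, H r j * H r k : ℤ) : ℚ) = ∑ r, (H r j : ℚ) * (H r k : ℚ) := by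
        push_cast; ring
      simp only [Matrix.mul_apply, Matrix.transpose_apply, Matrix.smul_apply,
        Matrix.one_apply, Matrix.map_apply, hHq, smul_eq_mul]
      rw [← hcast, hcol j k]
      split <;> simp
    have h2q : ((n:ℚ)⁻¹ • Hqᵀ) * Hq = 1 := by
      rw [Matrix.smul_mul, h1q, smul_smul, inv_mul_cancel₀ hnq, one_smul]
    have h3q : Hq * ((n:ℚ)⁻¹ • Hqᵀ) = 1 := mul_eq_one_comm.mp h2q
    have h4q : Hq * Hqᵀ = (n:ℚ) • 1 := by
      rw [← h3q, Matrix.mul_smul, smul_smul, mul_inv_cancel₀ hnq, one_smul]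
    intro r t
    have h := congrFun (congrFun h4q r) t
    simp only [Matrix.mul_apply, Matrix.transpose_apply, Matrix.map_apply, hHq,
      Matrix.smul_apply, Matrix.one_apply, smul_eq_mul, mul_ite, mul_one, mul_zero] at h
    have hcast : ((∑ j, H r j * H t j : ℤ) : ℚ) = ∑ j, (H r j : ℚ) * (H t j : ℚ) := by
      push_cast; ring
    have : ((∑ j, H r j * H t j : ℤ) : ℚ) = ((if r = t then (n:ℤ) else 0 : ℤ) : ℚ) := by
      rw [hcast, h]; split <;> simp
    exact_mod_cast this
  -- diagonal of M
  have cdiag : ∀ i : Fin n, colDot H R i i = (ℓ:ℤ) := by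
    intro i
    simp only [colDot]
    rw [Finset.sum_congr rfl (fun r _ => hsq r i), Finset.sum_const, hRcard, nsmul_eq_mul, mul_one]
  classical
  set kB : Fin n → ℕ := fun i => (univ.filter fun j => j ≠ i ∧ ¬ colDot H R i j = a).card with hkB
  have hkab : ∀ i : Fin n, kA H R a i + kB i = n - 1 := by
    intro i
    have ha1 : (univ.filter fun j : Fin n => j ≠ i ∧ colDot H R i j = a)
        = (univ.filter fun j : Fin n => j ≠ i).filter (fun j => colDot H R i j = a) := by
      rw [Finset.filter_filter]
    have ha2 : (univ.filter fun j : Fin n => j ≠ i ∧ ¬ colDot H R i j = a)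
        = (univ.filter fun j : Fin n => j ≠ i).filter (fun j => ¬ colDot H R i j = a) := by
      rw [Finset.filter_filter]
    have h3 := Finset.card_filter_add_card_filter_not
      (s := univ.filter fun j : Fin n => j ≠ i) (p := fun j => colDot H R i j = a)
    have h4 : (univ.filter fun j : Fin n => j ≠ i).card = n - 1 := by
      rw [Finset.filter_ne', Finset.card_erase_of_mem (mem_univ i), Finset.card_univ,
        Fintype.card_fin]
    rw [h4] at h3
    show (univ.filter fun j : Fin n => j ≠ i ∧ colDot H R i j = a).card
      + (univ.filter fun j : Fin n => j ≠ i ∧ ¬ colDot H R i j = a).card = n - 1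
    rw [ha1, ha2]
    exact h3
  have hsplit : ∀ (i : Fin n) (F : ℤ → ℤ), ∑ j, F (colDot H R i j)
      = F (ℓ:ℤ) + (kA H R a i : ℤ) * F a + (kB i : ℤ) * F b := by
    intro i F
    have e1 : ∑ j ∈ (univ.filter fun j : Fin n => j ≠ i).filter (fun j => colDot H R i j = a),
        F (colDot H R i j) = (kA H R a i : ℤ) * F a := by
      rw [Finset.filter_filter,
        Finset.sum_congr rfl (fun j hj => by rw [(Finset.mem_filter.mp hj).2.2]),
        Finset.sum_const, nsmul_eq_mul]
      try rfl
    have e2 : ∑ j ∈ (univ.filter fun j : Fin n => j ≠ i).filter (fun j => ¬ colDot H R i j = a),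
        F (colDot H R i j) = (kB i : ℤ) * F b := by
      rw [Finset.filter_filter,
        Finset.sum_congr rfl (fun j hj => by
          obtain ⟨-, hji, hne⟩ := Finset.mem_filter.mp hj
          rcases hab i j (Ne.symm hji) with h | h
          · exact absurd h hne
          · rw [h]),
        Finset.sum_const, nsmul_eq_mul]
      try rfl
    rw [← Finset.add_sum_erase _ _ (mem_univ i), cdiag i, ← Finset.filter_ne',
      ← Finset.sum_filter_add_sum_filter_not (univ.filter fun j : Fin n => j ≠ i)
        (fun j => colDot H R i j = a), e1, e2]
    ring
  -- key identity: sum of squared column dots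
  have keyA : ∀ i : Fin n, ∑ j, (colDot H R i j)^2 = (n:ℤ) * (ℓ:ℤ) := by
    intro i
    have := sum_sq_eval R (fun r => H r i) (fun r j => H r j)
      (fun r _ t _ => hrow r t)
    simp only [colDot]
    rw [this]
    rw [Finset.sum_congr rfl (fun r _ => by rw [sq, hsq r i]), Finset.sum_const, hRcard,
      nsmul_eq_mul, mul_one]
  have hint : ∀ i : Fin n, (ℓ:ℤ)^2 + (kA H R a i : ℤ) * a^2 + (kB i : ℤ) * b^2 = (n:ℤ) * ℓ := by
    intro i
    have := hsplit i (fun x => x^2)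
    rw [keyA i] at this
    linarith [this]
  have ha2b2 : (a:ℚ)^2 - (b:ℚ)^2 ≠ 0 := by
    have hb1 : (b:ℚ) ≠ (a:ℚ) := by exact_mod_cast hba
    have hb2 : (b:ℚ) ≠ -(a:ℚ) := by exact_mod_cast hbna
    intro h
    have : ((a:ℚ) - b) * ((a:ℚ) + b) = 0 := by ring_nf; linarith [h]
    rcases mul_eq_zero.mp this with h' | h'
    · exact hb1 (by linarith)
    · exact hb2 (by linarith)
  have part1 : ∀ i : Fin n, (kA H R a i : ℚ) =
      ((ℓ : ℚ) * ((n : ℚ) - (ℓ : ℚ)) - (b : ℚ) ^ 2 * ((n : ℚ) - 1)) /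
        ((a : ℚ) ^ 2 - (b : ℚ) ^ 2) := by
    intro i
    rw [eq_div_iff ha2b2]
    have E1 : (ℓ:ℚ)^2 + (kA H R a i : ℚ) * (a:ℚ)^2 + (kB i : ℚ) * (b:ℚ)^2 = (n:ℚ) * ℓ := by
      exact_mod_cast hint i
    have E2 : (kA H R a i : ℚ) + (kB i : ℚ) + 1 = (n:ℚ) := by
      have := hkab i
      have h' : kA H R a i + kB i + 1 = n := by omega
      exact_mod_cast h'
    linear_combination E1 - (b:ℚ)^2 * E2
  have hkconst : ∀ i i' : Fin n, kA H R a i = kA H R a i' := by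
    intro i i'
    have := (part1 i).trans (part1 i').symm
    exact_mod_cast this
  refine ⟨part1, ?_⟩
  -- row sums
  have F1 : ∑ r, (∑ j, H r j)^2 = (n:ℤ) * n := by
    have h := sum_sq_eval (univ : Finset (Fin n)) (fun _ => (1:ℤ)) (fun c r => H r c)
      (fun c _ c' _ => hcol c c')
    simp only [one_mul, one_pow, Finset.sum_const, Finset.card_univ, Fintype.card_fin,
      nsmul_eq_mul, mul_one] at h
    exact h
  have F2 : ∀ i : Fin n, ∑ j, colDot H R i j = ∑ r ∈ R, H r i * (∑ j, H r j) := by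
    intro i
    simp only [colDot]
    rw [Finset.sum_comm]
    exact Finset.sum_congr rfl fun r _ => (Finset.mul_sum _ _ _).symm
  have hi0 : 0 < n := by omega
  set i₀ : Fin n := ⟨0, hi0⟩ with hi₀
  obtain ⟨c, hcdef⟩ : ∃ c : ℤ, c = (ℓ:ℤ) + (kA H R a i₀ : ℤ) * a + (kB i₀ : ℤ) * b :=
    ⟨_, rfl⟩
  have hkBconst : ∀ i : Fin n, kB i = kB i₀ := by
    intro i
    have e1 := hkab i; have e2 := hkab i₀; have e3 := hkconst i i₀
    omega
  have hc : ∀ i : Fin n, ∑ j, colDot H R i j = c := by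
    intro i
    have h := hsplit i (fun x => x)
    rw [h, hkconst i i₀, hkBconst i, ← hcdef]
  set A : ℤ := ∑ r ∈ R, (∑ j, H r j)^2 with hAdef
  set B : ℤ := ∑ r ∈ Rᶜ, (∑ j, H r j)^2 with hBdef
  have hAB : A + B = (n:ℤ) * n := by
    rw [hAdef, hBdef, Finset.sum_add_sum_compl, F1]
  have hA : (n:ℤ) * c = A := by
    have h : ∑ i, ∑ j, colDot H R i j = A := by
      rw [Finset.sum_congr rfl (fun i _ => F2 i), Finset.sum_comm]
      exact Finset.sum_congr rfl fun r _ => by rw [← Finset.sum_mul, sq]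
    rw [← h, Finset.sum_congr rfl (fun i _ => hc i), Finset.sum_const, Finset.card_univ,
      Fintype.card_fin, nsmul_eq_mul]
  have hA2 : (n:ℤ) * c^2 = (n:ℤ) * A := by
    have h : ∑ i, (∑ j, colDot H R i j)^2 = (n:ℤ) * A := by
      have h3 := sum_sq_eval R (fun r => ∑ j, H r j) (fun r i => H r i)
        (fun r _ t _ => hrow r t)
      rw [← h3]
      refine Finset.sum_congr rfl fun i _ => ?_
      rw [F2 i]
      exact congrArg (·^2) (Finset.sum_congr rfl fun r _ => mul_comm _ _)
    rw [← h, Finset.sum_congr rfl (fun i _ => by rw [hc i]), Finset.sum_const,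
      Finset.card_univ, Fintype.card_fin, nsmul_eq_mul]
  have hcc : c = 0 ∨ c = n := by
    have h : c^2 = (n:ℤ) * c := by
      have := hA2
      rw [← hA] at this
      exact mul_left_cancel₀ hnz (by linarith)
    have h' : c * (c - n) = 0 := by linear_combination h
    rcases mul_eq_zero.mp h' with h'' | h''
    · exact Or.inl h''
    · exact Or.inr (by linarith)
  have hnn : (n:ℤ) * n ≠ 0 := mul_ne_zero hnz hnz
  have hzero : ∀ (T : Finset (Fin n)), (∑ r ∈ T, (∑ j, H r j)^2) = 0 →
      ∀ i ∈ T, ∑ j, H i j = 0 := by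
    intro T hT i hi
    have := (Finset.sum_eq_zero_iff_of_nonneg (fun r _ => sq_nonneg _)).mp hT i hi
    exact pow_eq_zero_iff two_ne_zero |>.mp this
  rcases hcc with h0 | hn
  · -- Type 1 : A = 0
    have hA0 : A = 0 := by rw [← hA, h0, mul_zero]
    have hB0 : B = (n:ℤ) * n := by omega
    refine Or.inl ⟨hzero R hA0, ?_⟩
    intro hall
    have : B = 0 := Finset.sum_eq_zero fun r hr => by rw [hall r hr]; ring
    omega
  · -- Type 2 : B = 0
    have hA0 : A = (n:ℤ) * n := by rw [← hA, hn]
    have hB0 : B = 0 := by omega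
    refine Or.inr ⟨hzero Rᶜ hB0, ?_⟩
    intro hall
    have : A = 0 := Finset.sum_eq_zero fun r hr => by rw [hall r hr]; ring
    omega
end

section
/- Suppose H is a nontrivial BSHM(n,ℓ,a,b) with respect to H₁ (so 1 < ℓ < n−1), with the values a and b both attained. Then: (i) ℓ ≡ a ≡ b (mod 2); (ii) ℓ ≡ a (mod 4) or ℓ ≡ b (mod 4). -/
open Matrix

lemma colDot_mod2 {n : ℕ} (H : Matrix (Fin n) (Fin n) ℤ)
    (hent : ∀ i j, H i j = 1 ∨ H i j = -1) (R : Finset (Fin n)) (j k : Fin n) :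
    Int.ModEq 2 (R.card : ℤ) (colDot H R j k) := by
  have h2 : ((2:ℕ):ℤ) = 2 := rfl
  rw [← h2, ← ZMod.intCast_eq_intCast_iff]
  unfold colDot
  push_cast
  rw [Finset.sum_congr rfl (g := fun _ => (1 : ZMod 2))]
  · simp
  · intro i _
    rcases hent i j with h | h <;> rcases hent i k with h' | h' <;>
      simp [h, h'] <;> decide

lemma colDot_triple_mod4 {n : ℕ} (H : Matrix (Fin n) (Fin n) ℤ)
    (hent : ∀ i j, H i j = 1 ∨ H i j = -1) (R : Finset (Fin n)) (j k m : Fin n) :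
    Int.ModEq 4 (colDot H R j k + colDot H R k m) ((R.card : ℤ) + colDot H R j m) := by
  have h4 : ((4:ℕ):ℤ) = 4 := rfl
  rw [← h4, ← ZMod.intCast_eq_intCast_iff]
  unfold colDot
  push_cast
  rw [Finset.card_eq_sum_ones R]
  push_cast
  have key : ∀ i ∈ R, ((H i j : ZMod 4) * (H i k : ZMod 4) + (H i k : ZMod 4) * (H i m : ZMod 4))
      = 1 + (H i j : ZMod 4) * (H i m : ZMod 4) := by
    intro i _
    rcases hent i j with h | h <;> rcases hent i k with h' | h' <;>
      rcases hent i m with h'' | h'' <;> simp [h, h'] <;> simp [h''] <;> decide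
  rw [← Finset.sum_add_distrib, ← Finset.sum_add_distrib]
  exact Finset.sum_congr rfl key

theorem stmt8 {n ℓ : ℕ} (a b : ℤ) (H : Matrix (Fin n) (Fin n) ℤ)
    (R : Finset (Fin n)) (hRcard : R.card = ℓ) (h1 : 1 < ℓ) (h2 : ℓ < n - 1)
    (hbshm : IsBSHM H R a b)
    (haAtt : ∃ j k, j ≠ k ∧ colDot H R j k = a)
    (hbAtt : ∃ j k, j ≠ k ∧ colDot H R j k = b) :
    (Int.ModEq 2 (ℓ : ℤ) a ∧ Int.ModEq 2 a b) ∧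
    (Int.ModEq 4 (ℓ : ℤ) a ∨ Int.ModEq 4 (ℓ : ℤ) b) := by
  obtain ⟨⟨hent, _⟩, hval⟩ := hbshm
  obtain ⟨j1, k1, hjk1, ha⟩ := haAtt
  obtain ⟨j2, k2, hjk2, hb⟩ := hbAtt
  have hA : Int.ModEq 2 (ℓ : ℤ) a := by
    have := colDot_mod2 H hent R j1 k1
    rw [hRcard, ha] at this; exact this
  have hB : Int.ModEq 2 (ℓ : ℤ) b := by
    have := colDot_mod2 H hent R j2 k2
    rw [hRcard, hb] at this; exact this
  refine ⟨⟨hA, hA.symm.trans hB⟩, ?_⟩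
  have hn : 4 ≤ n := by omega
  have t := colDot_triple_mod4 H hent R ⟨0, by omega⟩ ⟨1, by omega⟩ ⟨2, by omega⟩
  rw [hRcard] at t
  have e01 : (⟨0, by omega⟩ : Fin n) ≠ ⟨1, by omega⟩ := by simp [Fin.ext_iff]
  have e12 : (⟨1, by omega⟩ : Fin n) ≠ ⟨2, by omega⟩ := by simp [Fin.ext_iff]
  have e02 : (⟨0, by omega⟩ : Fin n) ≠ ⟨2, by omega⟩ := by simp [Fin.ext_iff]
  rcases hval _ _ e01 with h01 | h01 <;> rcases hval _ _ e12 with h12 | h12 <;>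
    rcases hval _ _ e02 with h02 | h02 <;>
    rw [h01, h12, h02] at t <;>
    simp only [Int.ModEq] at hA hB t ⊢ <;> omega
end

section
/- Suppose H is a nontrivial BSHM(n,ℓ,a,b) with respect to H₁ (so 1 < ℓ < n−1), with the values a and b both attained, and suppose a ≢ b (mod 4). Then either ℓ = 2 and {a,b} = {2,0}, or ℓ = n−2 and {a,b} = {−2,0}. -/
open Matrix

set_option maxHeartbeats 1000000

lemma sum_prod_pm {ι : Type*} [DecidableEq ι] (R : Finset ι) (f : ι → ℤ)
    (hf : ∀ i ∈ R, f i = 1 ∨ f i = -1) :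
    ∃ m : ℕ, (∑ i ∈ R, f i) = R.card - 2 * m ∧ (∏ i ∈ R, f i) = (-1) ^ m := by
  classical
  induction R using Finset.induction_on with
  | empty => exact ⟨0, by simp⟩
  | insert _ _ hnotmem ih =>
    rename_i i S
    obtain ⟨m, hm, hp⟩ := ih (fun i hi => hf i (Finset.mem_insert_of_mem hi))
    rcases hf i (Finset.mem_insert_self i S) with h1 | h1
    · refine ⟨m, ?_, ?_⟩
      · rw [Finset.sum_insert hnotmem, h1, hm, Finset.card_insert_of_notMem hnotmem]
        push_cast; ring
      · rw [Finset.prod_insert hnotmem, h1, hp, one_mul]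
    · refine ⟨m + 1, ?_, ?_⟩
      · rw [Finset.sum_insert hnotmem, h1, hm, Finset.card_insert_of_notMem hnotmem]
        push_cast; ring
      · rw [Finset.prod_insert hnotmem, h1, hp, pow_succ]; ring

lemma hadamard_rows {n : ℕ} (H : Matrix (Fin n) (Fin n) ℤ)
    (hent : ∀ i j, H i j = 1 ∨ H i j = -1)
    (horth : Hᵀ * H = (n : ℤ) • 1) : H * Hᵀ = (n : ℤ) • 1 := by
  set X := H * Hᵀ with hXdef
  have hdiag : ∀ i, X i i = n := by
    intro i
    have : ∀ k ∈ Finset.univ, H i k * Hᵀ k i = 1 := by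
      intro k _
      rw [Matrix.transpose_apply]
      rcases hent i k with h | h <;> rw [h] <;> ring
    rw [hXdef, Matrix.mul_apply, Finset.sum_congr rfl this]
    simp
  have hXX : X * X = (n : ℤ) • X := by
    calc X * X = H * (Hᵀ * H) * Hᵀ := by rw [hXdef]; noncomm_ring
    _ = (n : ℤ) • X := by rw [horth, hXdef]; rw [Matrix.mul_smul, Matrix.mul_one, Matrix.smul_mul]
  have hsym : ∀ i k, X k i = X i k := by
    intro i k
    have : Xᵀ = X := by rw [hXdef, Matrix.transpose_mul, Matrix.transpose_transpose]
    conv_lhs => rw [← this, Matrix.transpose_apply]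
  set Y := X - (n : ℤ) • 1 with hYdef
  have hYdiag : ∀ i, Y i i = 0 := by
    intro i
    simp only [hYdef, Matrix.sub_apply, Matrix.smul_apply, Matrix.one_apply,
      hdiag i, smul_eq_mul]
    norm_num
  have hY2 : Y * Y = (-(n:ℤ)) • Y := by
    rw [hYdef]
    rw [sub_mul, mul_sub, mul_sub, hXX]
    rw [Matrix.smul_mul, Matrix.mul_smul, Matrix.one_mul, Matrix.mul_one, Matrix.smul_mul, Matrix.one_mul]
    rw [smul_sub]
    module
  have hYzero : ∀ i k, Y i k = 0 := by
    intro i k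
    have hsum : ∑ k', Y i k' * Y i k' = 0 := by
      have h1 := congrFun (congrFun hY2 i) i
      rw [Matrix.mul_apply] at h1
      have h2 : ∀ k' ∈ Finset.univ, Y i k' * Y k' i = Y i k' * Y i k' := by
        intro k' _
        have : Y k' i = Y i k' := by
          by_cases h : i = k'
          · subst h; rfl
          · have h' : ¬ k' = i := fun hh => h hh.symm
            simp only [hYdef, Matrix.sub_apply, Matrix.smul_apply, Matrix.one_apply,
              if_neg h, if_neg h', hsym i k']
        rw [this]
      rw [Finset.sum_congr rfl h2] at h1
      rw [h1]
      simp only [Matrix.smul_apply, hYdiag i, smul_eq_mul, mul_zero]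
    have := Finset.sum_eq_zero_iff_of_nonneg (fun k' _ => mul_self_nonneg (Y i k')) |>.mp hsum k (Finset.mem_univ k)
    exact mul_self_eq_zero.mp this
  have : Y = 0 := by ext i k; exact hYzero i k
  rw [hYdef] at this
  linear_combination (norm := abel) this -- X - n•1 = 0 → X = n•1 ?

lemma sum_colDot_mul {n : ℕ} (H : Matrix (Fin n) (Fin n) ℤ)
    (hrow : H * Hᵀ = (n : ℤ) • 1) (R : Finset (Fin n)) (j j' : Fin n) :
    ∑ k, colDot H R j k * colDot H R j' k = (n : ℤ) * colDot H R j j' := by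
  have hr : ∀ i i', ∑ k, H i k * H i' k = if i = i' then (n : ℤ) else 0 := by
    intro i i'
    have h := congrFun (congrFun hrow i) i'
    simp only [Matrix.mul_apply, Matrix.transpose_apply, Matrix.smul_apply, Matrix.one_apply,
      smul_eq_mul, mul_ite, mul_one, mul_zero] at h
    exact h
  calc ∑ k, colDot H R j k * colDot H R j' k
      = ∑ k, ∑ i ∈ R, ∑ i' ∈ R, (H i j * H i k) * (H i' j' * H i' k) := by
        refine Finset.sum_congr rfl fun k _ => ?_
        rw [colDot, colDot, Finset.sum_mul_sum]
    _ = ∑ i ∈ R, ∑ i' ∈ R, ∑ k, (H i j * H i k) * (H i' j' * H i' k) := by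
        rw [Finset.sum_comm]
        exact Finset.sum_congr rfl fun i _ => Finset.sum_comm
    _ = ∑ i ∈ R, ∑ i' ∈ R, (H i j * H i' j') * ∑ k, H i k * H i' k := by
        refine Finset.sum_congr rfl fun i _ => Finset.sum_congr rfl fun i' _ => ?_
        rw [Finset.mul_sum]
        exact Finset.sum_congr rfl fun k _ => by ring
    _ = ∑ i ∈ R, ∑ i' ∈ R, (if i' = i then (H i j * H i' j') * (n : ℤ) else 0) := by
        refine Finset.sum_congr rfl fun i _ => Finset.sum_congr rfl fun i' _ => ?_
        rw [hr i i']
        by_cases h : i = i'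
        · subst h; simp
        · rw [if_neg h, if_neg (fun hh => h hh.symm), mul_zero]
    _ = ∑ i ∈ R, (if i ∈ R then (H i j * H i j') * (n : ℤ) else 0) := by
        refine Finset.sum_congr rfl fun i _ => ?_
        exact Finset.sum_ite_eq' R i (fun i' => (H i j * H i' j') * (n : ℤ))
    _ = (n : ℤ) * colDot H R j j' := by
        rw [colDot, Finset.mul_sum]
        refine Finset.sum_congr rfl fun i hi => ?_
        rw [if_pos hi]; ring

lemma classified {n ℓ : ℕ} (α β : ℤ) (H : Matrix (Fin n) (Fin n) ℤ) (R : Finset (Fin n))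
    (hcard : R.card = ℓ) (h1 : 1 < ℓ) (h2 : ℓ < n - 1)
    (hent : ∀ i j, H i j = 1 ∨ H i j = -1) (horth : Hᵀ * H = (n : ℤ) • 1)
    (s : Fin n → ℤ) (hs : ∀ j, s j = 1 ∨ s j = -1)
    (hsame : ∀ j k : Fin n, j ≠ k → s j = s k → colDot H R j k = β)
    (hcross : ∀ j k : Fin n, s j ≠ s k → colDot H R j k = α)
    (j₀ k₀ : Fin n) (hjk : s j₀ ≠ s k₀) :
    (ℓ = 2 ∧ β = 2 ∧ α = 0) ∨ (ℓ = n - 2 ∧ β = -2 ∧ α = 0) := by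
  classical
  have hn4 : 4 ≤ n := by omega
  have hl1 : ℓ + 1 < n := by omega
  have hmulT : H * Hᵀ = (n : ℤ) • 1 := hadamard_rows H hent horth
  have hdiag : ∀ j, colDot H R j j = (ℓ : ℤ) := by
    intro j
    have h : ∀ i ∈ R, H i j * H i j = 1 := fun i _ => by
      rcases hent i j with h | h <;> rw [h] <;> ring
    rw [colDot, Finset.sum_congr rfl h, Finset.sum_const, hcard]
    simp
  set M : Fin n → Finset (Fin n) := fun j => Finset.univ.filter (fun k => s k = s j)
    with hMdef
  have hmemM : ∀ j k, k ∈ M j ↔ s k = s j := by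
    intro j k; simp [hMdef]
  have hself : ∀ j, j ∈ M j := fun j => (hmemM j j).mpr rfl
  have hcardle : ∀ j, (M j).card ≤ n := by
    intro j
    have := Finset.card_le_card (Finset.filter_subset (fun k => s k = s j) Finset.univ)
    simpa using this
  have hcompl : ∀ j, (Finset.univ.filter (fun k => ¬ s k = s j)).card = n - (M j).card := by
    intro j
    have h2 : (M j).card + (Finset.univ.filter (fun k => ¬ s k = s j)).card = n := by
      rw [hMdef]
      simpa using Finset.card_filter_add_card_filter_not
        (s := (Finset.univ : Finset (Fin n))) (p := fun k => s k = s j)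
    omega
  -- Equation E1
  have hE1 : ∀ j, (ℓ:ℤ)^2 + (((M j).card : ℤ) - 1) * β^2 + ((n:ℤ) - (M j).card) * α^2
      = (n:ℤ) * ℓ := by
    intro j
    have hkey := sum_colDot_mul H hmulT R j j
    rw [hdiag j] at hkey
    rw [← Finset.sum_filter_add_sum_filter_not Finset.univ (fun k => s k = s j)
      (fun k => colDot H R j k * colDot H R j k)] at hkey
    have hA : ∑ k ∈ Finset.univ.filter (fun k => s k = s j),
        colDot H R j k * colDot H R j k
        = (ℓ:ℤ) * ℓ + (((M j).card - 1 : ℕ) : ℤ) * (β * β) := by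
      rw [← Finset.add_sum_erase _ _ (hself j)]
      congr 1
      · rw [hdiag j]
      · have h : ∀ k ∈ (M j).erase j, colDot H R j k * colDot H R j k = β * β := by
          intro k hk
          obtain ⟨hkj, hkM⟩ := Finset.mem_erase.mp hk
          rw [hsame j k (fun h => hkj h.symm) ((hmemM j k).mp hkM).symm]
        rw [Finset.sum_congr rfl h, Finset.sum_const, Finset.card_erase_of_mem (hself j),
          nsmul_eq_mul]
    have hB : ∑ k ∈ Finset.univ.filter (fun k => ¬ s k = s j),
        colDot H R j k * colDot H R j k = ((n - (M j).card : ℕ) : ℤ) * (α * α) := by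
      have h : ∀ k ∈ Finset.univ.filter (fun k => ¬ s k = s j),
          colDot H R j k * colDot H R j k = α * α := by
        intro k hk
        have hk' : ¬ s k = s j := (Finset.mem_filter.mp hk).2
        rw [hcross j k (fun h => hk' h.symm)]
      rw [Finset.sum_congr rfl h, Finset.sum_const, hcompl j, nsmul_eq_mul]
    rw [hA, hB] at hkey
    have hc1 : 1 ≤ (M j).card := Finset.card_pos.mpr ⟨j, hself j⟩
    have hcle := hcardle j
    push_cast [Nat.cast_sub hc1, Nat.cast_sub hcle] at hkey
    linear_combination hkey
  -- Equation E3 : same-class pair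
  have hE3 : ∀ j j', j' ≠ j → s j' = s j →
      2*(ℓ:ℤ)*β + (((M j).card : ℤ) - 2) * β^2 + ((n:ℤ) - (M j).card) * α^2 = (n:ℤ) * β := by
    intro j j' hne hss
    have hkey := sum_colDot_mul H hmulT R j j'
    rw [hsame j j' (fun h => hne h.symm) hss.symm] at hkey
    rw [← Finset.sum_filter_add_sum_filter_not Finset.univ (fun k => s k = s j)
      (fun k => colDot H R j k * colDot H R j' k)] at hkey
    have hj'M : j' ∈ M j := (hmemM j j').mpr hss
    have hj'e : j' ∈ (M j).erase j := Finset.mem_erase.mpr ⟨hne, hj'M⟩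
    have hA : ∑ k ∈ Finset.univ.filter (fun k => s k = s j),
        colDot H R j k * colDot H R j' k
        = (ℓ:ℤ) * β + (β * (ℓ:ℤ) + (((M j).card - 1 - 1 : ℕ) : ℤ) * (β * β)) := by
      rw [← Finset.add_sum_erase _ _ (hself j), ← Finset.add_sum_erase _ _ hj'e]
      congr 1
      · rw [hdiag j, hsame j' j hne hss]
      congr 1
      · rw [hdiag j', hsame j j' (fun h => hne h.symm) hss.symm]
      · have h : ∀ k ∈ ((M j).erase j).erase j', colDot H R j k * colDot H R j' k = β * β := by
          intro k hk
          obtain ⟨hkj', hk2⟩ := Finset.mem_erase.mp hk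
          obtain ⟨hkj, hkM⟩ := Finset.mem_erase.mp hk2
          have hsk : s k = s j := (hmemM j k).mp hkM
          rw [hsame j k (fun h => hkj h.symm) hsk.symm,
            hsame j' k (fun h => hkj' h.symm) (hss.trans hsk.symm)]
        rw [Finset.sum_congr rfl h, Finset.sum_const, Finset.card_erase_of_mem hj'e,
          Finset.card_erase_of_mem (hself j), nsmul_eq_mul]
    have hB : ∑ k ∈ Finset.univ.filter (fun k => ¬ s k = s j),
        colDot H R j k * colDot H R j' k = ((n - (M j).card : ℕ) : ℤ) * (α * α) := by
      have h : ∀ k ∈ Finset.univ.filter (fun k => ¬ s k = s j),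
          colDot H R j k * colDot H R j' k = α * α := by
        intro k hk
        have hk' : ¬ s k = s j := (Finset.mem_filter.mp hk).2
        rw [hcross j k (fun h => hk' h.symm),
          hcross j' k (fun h => hk' (hss ▸ h.symm ▸ rfl))]
      rw [Finset.sum_congr rfl h, Finset.sum_const, hcompl j, nsmul_eq_mul]
    rw [hA, hB] at hkey
    have hc2 : 2 ≤ (M j).card := by
      have := Finset.one_lt_card.mpr ⟨j, hself j, j', hj'M, fun h => hne h.symm⟩
      omega
    have hcle := hcardle j
    have hre : ((M j).card - 1 - 1 : ℕ) = (M j).card - 2 := by omega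
    rw [hre] at hkey
    push_cast [Nat.cast_sub hc2, Nat.cast_sub hcle] at hkey
    linear_combination hkey
  -- Equation E4 : cross pair
  have hE4 : α * (2*(ℓ:ℤ) + ((n:ℤ) - 2)*β - n) = 0 := by
    have hkey := sum_colDot_mul H hmulT R j₀ k₀
    rw [hcross j₀ k₀ hjk] at hkey
    rw [← Finset.sum_filter_add_sum_filter_not Finset.univ (fun k => s k = s j₀)
      (fun k => colDot H R j₀ k * colDot H R k₀ k)] at hkey
    have hk₀ : k₀ ∈ Finset.univ.filter (fun k => ¬ s k = s j₀) := by
      simp only [Finset.mem_filter, Finset.mem_univ, true_and]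
      exact fun h => hjk h.symm
    have hA : ∑ k ∈ Finset.univ.filter (fun k => s k = s j₀),
        colDot H R j₀ k * colDot H R k₀ k
        = (ℓ:ℤ) * α + (((M j₀).card - 1 : ℕ) : ℤ) * (β * α) := by
      rw [← Finset.add_sum_erase _ _ (hself j₀)]
      congr 1
      · rw [hdiag j₀, hcross k₀ j₀ (fun h => hjk h.symm)]
      · have h : ∀ k ∈ (M j₀).erase j₀, colDot H R j₀ k * colDot H R k₀ k = β * α := by
          intro k hk
          obtain ⟨hkj, hkM⟩ := Finset.mem_erase.mp hk
          have hsk : s k = s j₀ := (hmemM j₀ k).mp hkM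
          rw [hsame j₀ k (fun h => hkj h.symm) hsk.symm,
            hcross k₀ k (fun h => hjk (h.trans hsk).symm)]
        rw [Finset.sum_congr rfl h, Finset.sum_const, Finset.card_erase_of_mem (hself j₀),
          nsmul_eq_mul]
    have hB : ∑ k ∈ Finset.univ.filter (fun k => ¬ s k = s j₀),
        colDot H R j₀ k * colDot H R k₀ k
        = α * (ℓ:ℤ) + ((n - (M j₀).card - 1 : ℕ) : ℤ) * (α * β) := by
      rw [← Finset.add_sum_erase _ _ hk₀]
      congr 1
      · rw [hdiag k₀, hcross j₀ k₀ hjk]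
      · have h : ∀ k ∈ (Finset.univ.filter (fun k => ¬ s k = s j₀)).erase k₀,
            colDot H R j₀ k * colDot H R k₀ k = α * β := by
          intro k hk
          obtain ⟨hkk₀, hkF⟩ := Finset.mem_erase.mp hk
          have hk' : ¬ s k = s j₀ := (Finset.mem_filter.mp hkF).2
          have hsk : s k = s k₀ := by
            rcases hs k with h | h <;> rcases hs k₀ with h' | h' <;>
              rcases hs j₀ with h'' | h'' <;> simp_all
          rw [hcross j₀ k (fun h => hk' h.symm),
            hsame k₀ k (fun h => hkk₀ h.symm) hsk.symm]
        rw [Finset.sum_congr rfl h, Finset.sum_const, Finset.card_erase_of_mem hk₀,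
          hcompl j₀, nsmul_eq_mul]
    rw [hA, hB] at hkey
    have hc1 : 1 ≤ (M j₀).card := Finset.card_pos.mpr ⟨j₀, hself j₀⟩
    have hcle : (M j₀).card + 1 ≤ n := by
      have hk₀M : k₀ ∉ M j₀ := by
        rw [hmemM]; exact fun h => hjk h.symm
      have : (M j₀).card < (Finset.univ : Finset (Fin n)).card :=
        Finset.card_lt_card ⟨Finset.subset_univ _, fun hsub => hk₀M (hsub (Finset.mem_univ k₀))⟩
      simpa using this
    have h1' : 1 ≤ n - (M j₀).card := by omega
    push_cast [Nat.cast_sub hc1, Nat.cast_sub (by omega : (M j₀).card ≤ n),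
      Nat.cast_sub h1'] at hkey
    linear_combination hkey
  -- complement card relation
  have hQrel : (M k₀).card + (M j₀).card = n := by
    have hEQ : M k₀ = Finset.univ.filter (fun k => ¬ s k = s j₀) := by
      ext k
      rw [hmemM]
      simp only [Finset.mem_filter, Finset.mem_univ, true_and]
      rcases hs k with h | h <;> rcases hs k₀ with h' | h' <;>
        rcases hs j₀ with h'' | h'' <;> simp_all
    rw [hEQ, hcompl j₀]
    have := hcardle j₀
    omega
  set P : ℤ := ((M j₀).card : ℤ) with hPdef
  set Q : ℤ := ((M k₀).card : ℤ) with hQdef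
  have hPQ : P + Q = n := by rw [hPdef, hQdef]; push_cast [← hQrel]; ring
  have hP1 : 1 ≤ P := by
    rw [hPdef]; exact_mod_cast Finset.card_pos.mpr ⟨j₀, hself j₀⟩
  have hQ1 : 1 ≤ Q := by
    rw [hQdef]; exact_mod_cast Finset.card_pos.mpr ⟨k₀, hself k₀⟩
  -- quadratic for β
  have hquad : ((ℓ:ℤ) - β)^2 = (n:ℤ) * ((ℓ:ℤ) - β) := by
    have hor : 2 ≤ (M j₀).card ∨ 2 ≤ (M k₀).card := by omega
    rcases hor with h | h
    · obtain ⟨j₁, hj₁M, hj₁ne⟩ :=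
        Finset.exists_mem_ne (s := M j₀) (by omega) j₀
      have := hE3 j₀ j₁ hj₁ne ((hmemM j₀ j₁).mp hj₁M)
      linear_combination hE1 j₀ - this
    · obtain ⟨j₁, hj₁M, hj₁ne⟩ :=
        Finset.exists_mem_ne (s := M k₀) (by omega) k₀
      have := hE3 k₀ j₁ hj₁ne ((hmemM k₀ j₁).mp hj₁M)
      linear_combination hE1 k₀ - this
  have hbcase : β = (ℓ:ℤ) ∨ β = (ℓ:ℤ) - n := by
    have : ((ℓ:ℤ) - β) * (((ℓ:ℤ) - β) - n) = 0 := by linear_combination hquad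
    rcases mul_eq_zero.mp this with h | h
    · left; linarith
    · right; linarith
  have hEP := hE1 j₀
  have hEQ := hE1 k₀
  rw [← hPdef] at hEP
  rw [← hQdef] at hEQ
  rcases hbcase with hβ | hβ
  · -- β = ℓ, conclude ℓ = 2, α = 0
    left
    have hα : α = 0 := by
      have hfac : 2*(ℓ:ℤ) + ((n:ℤ) - 2)*β - n = (n:ℤ) * ((ℓ:ℤ) - 1) := by
        rw [hβ]; ring
      rw [hfac] at hE4
      rcases mul_eq_zero.mp hE4 with h | h
      · exact h
      · exfalso
        rcases mul_eq_zero.mp h with h' | h'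
        · have : (0:ℤ) < n := by exact_mod_cast Nat.pos_of_ne_zero (by omega)
          linarith
        · have : (2:ℤ) ≤ ℓ := by exact_mod_cast h1
          linarith
    have hl0 : (ℓ:ℤ) ≠ 0 := by
      have : (2:ℤ) ≤ ℓ := by exact_mod_cast h1
      linarith
    rw [hβ, hα] at hEP hEQ
    have hPl : P * (ℓ:ℤ) = n := by
      have : (P * (ℓ:ℤ)) * (ℓ:ℤ) = (n:ℤ) * (ℓ:ℤ) := by linear_combination hEP
      exact mul_right_cancel₀ hl0 this
    have hQl : Q * (ℓ:ℤ) = n := by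
      have : (Q * (ℓ:ℤ)) * (ℓ:ℤ) = (n:ℤ) * (ℓ:ℤ) := by linear_combination hEQ
      exact mul_right_cancel₀ hl0 this
    have hPQeq : P = Q := by
      have := hPl.trans hQl.symm
      exact mul_right_cancel₀ hl0 this
    have hl2 : (ℓ:ℤ) = 2 := by
      have hP0 : P ≠ 0 := by linarith
      have h2P : P * (ℓ:ℤ) = P * 2 := by rw [hPl]; linarith [hPQ, hPQeq]
      exact mul_left_cancel₀ hP0 h2P
    refine ⟨by exact_mod_cast hl2, by rw [hβ, hl2], hα⟩
  · -- β = ℓ - n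
    right
    have hα : α = 0 := by
      have hfac : 2*(ℓ:ℤ) + ((n:ℤ) - 2)*β - n = (n:ℤ) * ((ℓ:ℤ) - n + 1) := by
        rw [hβ]; ring
      rw [hfac] at hE4
      rcases mul_eq_zero.mp hE4 with h | h
      · exact h
      · exfalso
        rcases mul_eq_zero.mp h with h' | h'
        · have : (0:ℤ) < n := by exact_mod_cast Nat.pos_of_ne_zero (by omega)
          linarith
        · have : (ℓ:ℤ) + 1 < n := by exact_mod_cast hl1
          linarith
    have hD0 : (ℓ:ℤ) - n ≠ 0 := by
      have : (ℓ:ℤ) + 1 < n := by exact_mod_cast hl1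
      linarith
    rw [hβ, hα] at hEP hEQ
    have hPl : (P - 1) * ((ℓ:ℤ) - n) = -(ℓ:ℤ) := by
      have : ((P - 1) * ((ℓ:ℤ) - n)) * ((ℓ:ℤ) - n) = (-(ℓ:ℤ)) * ((ℓ:ℤ) - n) := by
        linear_combination hEP
      exact mul_right_cancel₀ hD0 this
    have hQl : (Q - 1) * ((ℓ:ℤ) - n) = -(ℓ:ℤ) := by
      have : ((Q - 1) * ((ℓ:ℤ) - n)) * ((ℓ:ℤ) - n) = (-(ℓ:ℤ)) * ((ℓ:ℤ) - n) := by
        linear_combination hEQ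
      exact mul_right_cancel₀ hD0 this
    have hPQeq : P = Q := by
      have := hPl.trans hQl.symm
      have := mul_right_cancel₀ hD0 this
      linarith
    have hln2 : (ℓ:ℤ) = n - 2 := by
      have hP0 : P ≠ 0 := by linarith
      have hn2P : (n:ℤ) = 2 * P := by rw [hPQeq] at hPQ; linarith
      rw [hn2P] at hPl
      have h5 : P * (ℓ:ℤ) = P * (2*P - 2) := by linear_combination hPl
      have := mul_left_cancel₀ hP0 h5
      rw [this, hn2P]
    have hln2' : ℓ = n - 2 := by omega
    refine ⟨hln2', by rw [hβ, hln2]; ring, hα⟩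

theorem stmt10 {n ℓ : ℕ} (a b : ℤ) (H : Matrix (Fin n) (Fin n) ℤ)
    (R : Finset (Fin n)) (hRcard : R.card = ℓ) (h1 : 1 < ℓ) (h2 : ℓ < n - 1)
    (hbshm : IsBSHM H R a b)
    (haAtt : ∃ j k, j ≠ k ∧ colDot H R j k = a)
    (hbAtt : ∃ j k, j ≠ k ∧ colDot H R j k = b)
    (hmod : ¬ Int.ModEq 4 a b) :
    (ℓ = 2 ∧ ({a, b} : Set ℤ) = {2, 0}) ∨
    (ℓ = n - 2 ∧ ({a, b} : Set ℤ) = {-2, 0}) := by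
  classical
  obtain ⟨⟨hent, horth⟩, hdots⟩ := hbshm
  have hmod' : ¬ (4:ℤ) ∣ (b - a) := fun hd => hmod (Int.modEq_iff_dvd.mpr hd)
  set s : Fin n → ℤ := fun j => ∏ i ∈ R, H i j with hsdef
  have hs : ∀ j, s j = 1 ∨ s j = -1 := by
    intro j
    obtain ⟨m, -, hp⟩ := sum_prod_pm R (fun i => H i j) (fun i _ => hent i j)
    rw [hsdef]
    simp only
    rw [hp]
    rcases Nat.even_or_odd m with he | ho
    · left; exact he.neg_one_pow
    · right; exact ho.neg_one_pow
  have hclass : ∀ j k : Fin n, j ≠ k →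
      (s j = s k ∧ (4:ℤ) ∣ colDot H R j k - ℓ) ∨
      (s j ≠ s k ∧ (4:ℤ) ∣ colDot H R j k - ℓ + 2) := by
    intro j k hjk
    obtain ⟨m, hmsum, hmprod⟩ := sum_prod_pm R (fun i => H i j * H i k)
      (fun i _ => by rcases hent i j with h | h <;> rcases hent i k with h' | h' <;>
        simp [h, h'])
    have hdot : colDot H R j k = (ℓ:ℤ) - 2*m := by rw [colDot, hmsum, hRcard]
    have hprod : s j * s k = (-1:ℤ)^m := by
      rw [hsdef]
      simp only
      rw [← Finset.prod_mul_distrib]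
      exact hmprod
    rcases Nat.even_or_odd m with he | ho
    · obtain ⟨t, rfl⟩ := he
      left
      constructor
      · have h1' : s j * s k = 1 := by
          rw [hprod]; exact Even.neg_one_pow ⟨t, rfl⟩
        rcases hs j with h | h <;> rcases hs k with h' | h' <;> rw [h, h'] at h1' ⊢ <;> omega
      · rw [hdot]
        exact ⟨-t, by push_cast; ring⟩
    · obtain ⟨t, rfl⟩ := ho
      right
      constructor
      · have h1' : s j * s k = -1 := by
          rw [hprod]; exact Odd.neg_one_pow ⟨t, rfl⟩
        rcases hs j with h | h <;> rcases hs k with h' | h' <;> rw [h, h'] at h1' ⊢ <;> omega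
      · rw [hdot]
        exact ⟨-t, by push_cast; ring⟩
  obtain ⟨ja, ka, hjka, hda⟩ := haAtt
  obtain ⟨jb, kb, hjkb, hdb⟩ := hbAtt
  have hca := hclass ja ka hjka
  have hcb := hclass jb kb hjkb
  rw [hda] at hca
  rw [hdb] at hcb
  rcases hca with ⟨hsa, hda4⟩ | ⟨hsa, hda4⟩ <;> rcases hcb with ⟨hsb, hdb4⟩ | ⟨hsb, hdb4⟩
  · exfalso; omega
  · -- a same-class value (β := a), b cross (α := b)
    have hsame : ∀ j k : Fin n, j ≠ k → s j = s k → colDot H R j k = a := by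
      intro j k hne hss
      rcases hdots j k hne with h | h
      · exact h
      · exfalso
        rcases hclass j k hne with ⟨-, h4⟩ | ⟨hne', -⟩
        · rw [h] at h4; omega
        · exact hne' hss
    have hcross : ∀ j k : Fin n, s j ≠ s k → colDot H R j k = b := by
      intro j k hss
      have hne : j ≠ k := fun h => hss (h ▸ rfl)
      rcases hdots j k hne with h | h
      · exfalso
        rcases hclass j k hne with ⟨hss', -⟩ | ⟨-, h4⟩
        · exact hss hss'
        · rw [h] at h4; omega
      · exact h
    rcases classified b a H R hRcard h1 h2 hent horth s hs hsame hcross jb kb hsb with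
      ⟨hl, ha', hb'⟩ | ⟨hl, ha', hb'⟩
    · left; exact ⟨hl, by rw [ha', hb']⟩
    · right; exact ⟨hl, by rw [ha', hb']⟩
  · -- a cross (α := a), b same-class (β := b)
    have hsame : ∀ j k : Fin n, j ≠ k → s j = s k → colDot H R j k = b := by
      intro j k hne hss
      rcases hdots j k hne with h | h
      · exfalso
        rcases hclass j k hne with ⟨-, h4⟩ | ⟨hne', -⟩
        · rw [h] at h4; omega
        · exact hne' hss
      · exact h
    have hcross : ∀ j k : Fin n, s j ≠ s k → colDot H R j k = a := by
      intro j k hss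
      have hne : j ≠ k := fun h => hss (h ▸ rfl)
      rcases hdots j k hne with h | h
      · exact h
      · exfalso
        rcases hclass j k hne with ⟨hss', -⟩ | ⟨-, h4⟩
        · exact hss hss'
        · rw [h] at h4; omega
    rcases classified a b H R hRcard h1 h2 hent horth s hs hsame hcross ja ka hsa with
      ⟨hl, hb', ha'⟩ | ⟨hl, hb', ha'⟩
    · left
      refine ⟨hl, ?_⟩
      rw [ha', hb', Set.pair_comm]
    · right
      refine ⟨hl, ?_⟩
      rw [ha', hb', Set.pair_comm]
  · exfalso; omega
end

section
/- (i) Suppose H is a nontrivial BSHM(n,2,a,b) with respect to a 2×n submatrix H₁, with the values a and b both attained. Then {a,b} = {2,0}, or n = 4 and {a,b} = {−2,0}. (ii) For every Hadamard matrix H of order n ≥ 4 there is a matrix H′ obtained from H by negating some of its columns such that H′ is a Hadamard matrix that is a BSHM(n,2,2,0) with respect to the submatrix formed by its first two rows. -/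
open Matrix

lemma pm_mul {x y : ℤ} (hx : x = 1 ∨ x = -1) (hy : y = 1 ∨ y = -1) :
    x * y = 1 ∨ x * y = -1 := by
  rcases hx with rfl | rfl <;> rcases hy with rfl | rfl <;> norm_num

lemma sq_one' {x : ℤ} (hx : x = 1 ∨ x = -1) : x * x = 1 := by
  rcases hx with rfl | rfl <;> norm_num

lemma sum_of_mul_neg {p q : ℤ} (hp : p = 1 ∨ p = -1) (hq : q = 1 ∨ q = -1)
    (h : p * q = -1) : p + q = 0 := by
  rcases hp with rfl | rfl <;> rcases hq with rfl | rfl <;> omega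

lemma sum_of_mul_one {p q : ℤ} (hp : p = 1 ∨ p = -1) (hq : q = 1 ∨ q = -1)
    (h : p * q = 1) : p + q = 2 ∨ p + q = -2 := by
  rcases hp with rfl | rfl <;> rcases hq with rfl | rfl <;> omega

lemma rowOrth {n : ℕ} {H : Matrix (Fin n) (Fin n) ℤ} (hH : _root_.IsHadamard H)
    {r s : Fin n} (hrs : r ≠ s) (hn : 0 < n) : ∑ j, H r j * H s j = 0 := by
  have hn' : (n : ℚ) ≠ 0 := by exact_mod_cast hn.ne'
  set H' : Matrix (Fin n) (Fin n) ℚ := H.map (Int.cast) with hH'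
  have h1 : H'ᵀ * H' = (n : ℚ) • (1 : Matrix (Fin n) (Fin n) ℚ) := by
    ext j k
    have h2 := congrFun (congrFun hH.2 j) k
    simp only [Matrix.mul_apply, Matrix.transpose_apply, Matrix.smul_apply,
      Matrix.one_apply, smul_eq_mul] at h2 ⊢
    simp only [hH', Matrix.map_apply]
    by_cases hjk : j = k
    · simp only [hjk, if_pos rfl] at h2 ⊢
      push_cast
      exact_mod_cast congrArg (Int.cast : ℤ → ℚ) h2
    · simp only [if_neg hjk, mul_zero] at h2 ⊢
      exact_mod_cast congrArg (Int.cast : ℤ → ℚ) h2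
  have hB : ((n : ℚ)⁻¹ • H'ᵀ) * H' = 1 := by
    rw [Matrix.smul_mul, h1, smul_smul, inv_mul_cancel₀ hn', one_smul]
  have hB' : H' * ((n : ℚ)⁻¹ • H'ᵀ) = 1 := mul_eq_one_comm.mp hB
  have h3 : H' * H'ᵀ = (n : ℚ) • (1 : Matrix (Fin n) (Fin n) ℚ) := by
    calc H' * H'ᵀ = (n : ℚ) • (H' * ((n : ℚ)⁻¹ • H'ᵀ)) := by
          rw [Matrix.mul_smul, smul_smul, mul_inv_cancel₀ hn', one_smul]
      _ = (n : ℚ) • 1 := by rw [hB']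
  have h4 := congrFun (congrFun h3 r) s
  simp only [Matrix.mul_apply, Matrix.transpose_apply, Matrix.smul_apply,
    Matrix.one_apply, if_neg hrs, smul_eq_mul, mul_zero, hH', Matrix.map_apply] at h4
  exact_mod_cast h4

lemma keyLemma {n : ℕ} {H : Matrix (Fin n) (Fin n) ℤ}
    (hE : ∀ i j, H i j = 1 ∨ H i j = -1) {r s : Fin n} (_hrs : r ≠ s) (hn : 4 ≤ n)
    (c : ℤ) (hall : ∀ j k : Fin n, j ≠ k →
      H r j * H r k + H s j * H s k = 0 ∨ H r j * H r k + H s j * H s k = c) :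
    c = 2 ∨ (n = 4 ∧ c = -2) := by
  obtain ⟨j, -, k, -, hjk, hx⟩ :=
    Finset.exists_ne_map_eq_of_card_lt_of_maps_to (s := (Finset.univ : Finset (Fin n)))
      (t := ({1, -1} : Finset ℤ)) (f := fun j => H r j * H s j)
      (by simp; omega)
      (fun j _ => by rcases pm_mul (hE r j) (hE s j) with h | h <;> simp [h])
  have hpq : (H r j * H r k) * (H s j * H s k) = 1 := by
    have e : (H r j * H r k) * (H s j * H s k) = (H r j * H s j) * (H r k * H s k) := by ring
    rw [e, hx]
    exact sq_one' (pm_mul (hE r k) (hE s k))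
  have hdot := sum_of_mul_one (pm_mul (hE r j) (hE r k)) (pm_mul (hE s j) (hE s k)) hpq
  have h2 := hall j k hjk
  rcases hdot with hd | hd <;> rw [hd] at h2
  · rcases h2 with h2 | h2
    · omega
    · exact Or.inl h2.symm
  · rcases h2 with h2 | h2
    · omega
    · -- c = -2, show n = 4
      right
      refine ⟨?_, h2.symm⟩
      have hall' : ∀ j k : Fin n, j ≠ k → ¬(H r j = H r k ∧ H s j = H s k) := by
        rintro j' k' hjk' ⟨e1, e2⟩
        have h3 := hall j' k' hjk'
        rw [e1, e2, sq_one' (hE r k'), sq_one' (hE s k')] at h3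
        rw [← h2] at h3
        omega
      have hcard : (Finset.univ : Finset (Fin n)).card ≤
          (({1, -1} : Finset ℤ) ×ˢ ({1, -1} : Finset ℤ)).card := by
        apply Finset.card_le_card_of_injOn (fun j => (H r j, H s j))
        · intro j' _
          rcases hE r j' with h | h <;> rcases hE s j' with h' | h' <;>
            simp [h, h', Finset.mem_product]
        · intro j' _ k' _ h
          by_contra hne
          simp only [Prod.mk.injEq] at h
          exact hall' j' k' hne ⟨h.1, h.2⟩
      simp at hcard
      omega

theorem stmt11 {n : ℕ} :
    (∀ (a b : ℤ) (H : Matrix (Fin n) (Fin n) ℤ) (R : Finset (Fin n)),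
      R.card = 2 → 2 < n - 1 → IsBSHM H R a b →
      (∃ j k, j ≠ k ∧ colDot H R j k = a) →
      (∃ j k, j ≠ k ∧ colDot H R j k = b) →
      ({a, b} : Set ℤ) = {2, 0} ∨ (n = 4 ∧ ({a, b} : Set ℤ) = {-2, 0})) ∧
    (∀ (H : Matrix (Fin n) (Fin n) ℤ) (hn : 4 ≤ n), _root_.IsHadamard H →
      ∃ ε : Fin n → ℤ, (∀ j, ε j = 1 ∨ ε j = -1) ∧
        IsBSHM (Matrix.of fun i j => ε j * H i j)
          ({⟨0, by omega⟩, ⟨1, by omega⟩} : Finset (Fin n)) 2 0) := by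
  constructor
  · intro a b H R hR hn1 hBSHM ha hb
    have hn : 4 ≤ n := by omega
    obtain ⟨r, s, hrs, rfl⟩ := Finset.card_eq_two.mp hR
    obtain ⟨⟨hE, horth⟩, hab⟩ := hBSHM
    have hdot : ∀ j k, colDot H {r, s} j k = H r j * H r k + H s j * H s k := by
      intro j k
      simp [colDot, Finset.sum_pair hrs]
    have hrow : ∑ j, H r j * H s j = 0 := rowOrth ⟨hE, horth⟩ hrs (by omega)
    have hxpm : ∀ j, H r j * H s j = 1 ∨ H r j * H s j = -1 :=
      fun j => pm_mul (hE r j) (hE s j)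
    have hsumn : ∑ j : Fin n, (1 : ℤ) = (n : ℤ) := by simp
    have hex1 : ∃ j, H r j * H s j = 1 := by
      by_contra h
      push_neg at h
      have h' : ∀ j, H r j * H s j = -1 := fun j => (hxpm j).resolve_left (h j)
      rw [Finset.sum_congr rfl (fun j _ => h' j)] at hrow
      simp at hrow
      omega
    have hex2 : ∃ j, H r j * H s j = -1 := by
      by_contra h
      push_neg at h
      have h' : ∀ j, H r j * H s j = 1 := fun j => (hxpm j).resolve_right (h j)
      rw [Finset.sum_congr rfl (fun j _ => h' j)] at hrow
      simp at hrow
      omega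
    obtain ⟨j0, hj0⟩ := hex1
    obtain ⟨k0, hk0⟩ := hex2
    have hjk0 : j0 ≠ k0 := by
      intro h
      rw [h, hk0] at hj0
      omega
    have hdot0 : colDot H {r, s} j0 k0 = 0 := by
      rw [hdot]
      apply sum_of_mul_neg (pm_mul (hE r j0) (hE r k0)) (pm_mul (hE s j0) (hE s k0))
      have e : (H r j0 * H r k0) * (H s j0 * H s k0)
          = (H r j0 * H s j0) * (H r k0 * H s k0) := by ring
      rw [e, hj0, hk0, one_mul]
    have hzero := hab j0 k0 hjk0
    rw [hdot0] at hzero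
    rcases hzero with h0 | h0
    · -- a = 0
      have hall : ∀ j k : Fin n, j ≠ k →
          H r j * H r k + H s j * H s k = 0 ∨ H r j * H r k + H s j * H s k = b := by
        intro j k hjk
        have h := hab j k hjk
        rw [hdot] at h
        rcases h with h | h
        · exact Or.inl (h.trans h0.symm)
        · exact Or.inr h
      rcases keyLemma hE hrs hn b hall with hc | ⟨hn4, hc⟩
      · left
        rw [← h0, hc]
        exact Set.pair_comm 0 2
      · right
        refine ⟨hn4, ?_⟩
        rw [← h0, hc]
        exact Set.pair_comm 0 (-2)
    · -- b = 0
      have hall : ∀ j k : Fin n, j ≠ k →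
          H r j * H r k + H s j * H s k = 0 ∨ H r j * H r k + H s j * H s k = a := by
        intro j k hjk
        have h := hab j k hjk
        rw [hdot] at h
        rcases h with h | h
        · exact Or.inr h
        · exact Or.inl (h.trans h0.symm)
      rcases keyLemma hE hrs hn a hall with hc | ⟨hn4, hc⟩
      · left
        rw [← h0, hc]
      · right
        refine ⟨hn4, ?_⟩
        rw [← h0, hc]
  · intro H hn4 hH
    obtain ⟨hE, horth⟩ := hH
    set z : Fin n := ⟨0, by omega⟩ with hz
    set o : Fin n := ⟨1, by omega⟩ with ho
    have hzo : z ≠ o := by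
      simp [hz, ho, Fin.ext_iff]
    refine ⟨fun j => H z j, fun j => hE z j, ?_, ?_⟩
    · constructor
      · intro i j
        exact pm_mul (hE z j) (hE i j)
      · ext j k
        have hkey := congrFun (congrFun horth j) k
        simp only [Matrix.mul_apply, Matrix.transpose_apply, Matrix.of_apply] at hkey ⊢
        have e : ∀ i, (H z j * H i j) * (H z k * H i k)
            = (H z j * H z k) * (H i j * H i k) := fun i => by ring
        rw [Finset.sum_congr rfl (fun i _ => e i), ← Finset.mul_sum, hkey]
        by_cases hjk : j = k
        · subst hjk
          rw [sq_one' (hE z j), one_mul]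
        · simp [Matrix.smul_apply, Matrix.one_apply, hjk]
    · intro j k hjk
      unfold colDot
      rw [Finset.sum_pair hzo]
      simp only [Matrix.of_apply]
      have h1 : (H z j * H z j) * (H z k * H z k) = 1 := by
        rw [sq_one' (hE z j), sq_one' (hE z k), one_mul]
      rcases pm_mul (pm_mul (hE z j) (hE o j)) (pm_mul (hE z k) (hE o k)) with h2 | h2
      · left
        have e : (H z j * H o j) * (H z k * H o k) = 2 - 1 := by rw [h2]; norm_num
        nlinarith [h1, h2]
      · right
        nlinarith [h1, h2]
end
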